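/- arXiv:1709.05032 — 2 statements merged into one kernel-verified Lean document; each statement's English description precedes it below -/
import Mathlib

section
/- Let G be a finite simple graph on vertices {1,…,n} with ordered edge set E that is vertex transitive and edge transitive, and let t ∈ [0,1] be irrational. Suppose the infimum defining f_q(t) is attained, i.e., there exist d ≥ 1, projections P₁,…,Pₙ ∈ M_d(ℂ), and a positive semidefinite ρ ∈ M_d(ℂ) with Tr(ρ) = 1, ρP_v = P_vρ and Tr(ρP_v) = t for all v, such that Σ_{(v,w)∈E} Tr(ρP_vP_w) = f_q(t). Then there exist rational numbers r and s with r ≤ t ≤ s (hence r < t < s, so the interval is nondegenerate) and real numbers a,b such that f_q(u) = a·u + b for all u ∈ [r,s]. -/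
open scoped BigOperators ComplexOrder

/-- A projection matrix: self-adjoint idempotent. -/
def IsProjMat {d : ℕ} (P : Matrix (Fin d) (Fin d) ℂ) : Prop :=
  P.IsHermitian ∧ P * P = P

/-- The (ordered) edge set of a graph `G` on `Fin n`, as a finset of ordered pairs. -/
def edgeFinset' {n : ℕ} (G : SimpleGraph (Fin n)) [DecidableRel G.Adj] :
    Finset (Fin n × Fin n) :=
  Finset.univ.filter fun vw : Fin n × Fin n => G.Adj vw.1 vw.2

/-- The set of values `Σ_{(v,w)∈E} Tr(ρ P_v P_w)` over all `d ≥ 1`, projections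
`P₁,…,Pₙ ∈ M_d(ℂ)` and positive semidefinite `ρ ∈ M_d(ℂ)` with `Tr(ρ)=1`,
`ρ P_v = P_v ρ` and `Tr(ρ P_v) = t` for all `v`. -/
def fqSet {n : ℕ} (G : SimpleGraph (Fin n)) [DecidableRel G.Adj] (t : ℝ) : Set ℝ :=
  {s | ∃ (d : ℕ), 1 ≤ d ∧
    ∃ (P : Fin n → Matrix (Fin d) (Fin d) ℂ) (ρ : Matrix (Fin d) (Fin d) ℂ),
      (∀ v, IsProjMat (P v)) ∧ ρ.PosSemidef ∧ ρ.trace = 1 ∧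
      (∀ v, ρ * P v = P v * ρ) ∧ (∀ v, (ρ * P v).trace = (t : ℂ)) ∧
      (s : ℂ) = ∑ vw ∈ edgeFinset' G, (ρ * P vw.1 * P vw.2).trace}

/-- `f_q(t)` for the graph `G`. -/
noncomputable def fq {n : ℕ} (G : SimpleGraph (Fin n)) [DecidableRel G.Adj] (t : ℝ) : ℝ :=
  sInf (fqSet G t)

/-- A graph automorphism of `G`, as a permutation preserving adjacency in both directions. -/
def IsGraphAut {n : ℕ} (G : SimpleGraph (Fin n)) (π : Equiv.Perm (Fin n)) : Prop :=
  ∀ v w, G.Adj v w ↔ G.Adj (π v) (π w)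

/-- Vertex transitivity. -/
def VertexTransitive {n : ℕ} (G : SimpleGraph (Fin n)) : Prop :=
  ∀ v w, ∃ π : Equiv.Perm (Fin n), IsGraphAut G π ∧ π v = w

/-- Edge transitivity. -/
def EdgeTransitive {n : ℕ} (G : SimpleGraph (Fin n)) : Prop :=
  ∀ v w x y, G.Adj v w → G.Adj x y →
    ∃ π : Equiv.Perm (Fin n), IsGraphAut G π ∧ π v = x ∧ π w = y

open Matrix

section Aux
variable {k : Type*} [Fintype k] [DecidableEq k]

lemma psd_diag_nonneg {A : Matrix k k ℂ} (hA : A.PosSemidef) (i : k) : 0 ≤ A i i := by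
  exact hA.diag_nonneg

lemma psd_trace_nonneg {A : Matrix k k ℂ} (hA : A.PosSemidef) : 0 ≤ A.trace :=
  Finset.sum_nonneg fun i _ => psd_diag_nonneg hA i

lemma cx_nonneg_eq_re {z : ℂ} (hz : 0 ≤ z) : z = (z.re : ℂ) := by
  have h := (Complex.le_def.mp hz).2
  exact Complex.ext (by simp) (by simp [← h])

lemma trace_nonneg_of_comm {A P P' : Matrix k k ℂ}
    (hA : A.PosSemidef) (hP : P.IsHermitian) (hP2 : P * P = P)
    (hP' : P'.IsHermitian) (hP'2 : P' * P' = P')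
    (hc : A * P = P * A) : 0 ≤ (A * P * P').trace := by
  have hPAP : P * A * P = A * P := by rw [← hc, mul_assoc, hP2]
  have hB : ((P' * P) * A * (P' * P)ᴴ).PosSemidef := hA.mul_mul_conjTranspose_same (P' * P)
  have h1 : (P' * P) * A * (P' * P)ᴴ = P' * (A * P) * P' := by
    rw [conjTranspose_mul, hP.eq, hP'.eq]
    calc P' * P * A * (P * P') = P' * (P * A * P) * P' := by noncomm_ring
      _ = P' * (A * P) * P' := by rw [hPAP]
  have h2 : (P' * (A * P) * P').trace = (A * P * P').trace := by
    calc (P' * (A * P) * P').trace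
        = (P' * ((A * P) * P')).trace := by rw [mul_assoc]
      _ = ((A * P) * P' * P').trace := by rw [trace_mul_comm]
      _ = (A * P * (P' * P')).trace := by rw [mul_assoc]
      _ = (A * P * P').trace := by rw [hP'2]
  have := psd_trace_nonneg hB
  rwa [h1, h2] at this

end Aux

open scoped MatrixOrder in
lemma Matrix.posSemidef_iff_eq_transpose_mul_self {k : Type*} [Fintype k] [DecidableEq k]
    {A : Matrix k k ℂ} : A.PosSemidef ↔ ∃ B : Matrix k k ℂ, A = Bᴴ * B := by
  constructor
  · intro hA
    obtain ⟨B, rfl⟩ := CStarAlgebra.nonneg_iff_eq_star_mul_self.mp hA.nonneg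
    exact ⟨B, rfl⟩
  · rintro ⟨B, rfl⟩
    exact Matrix.posSemidef_conjTranspose_mul_self B

section FqBasic

variable {n : ℕ} (G : SimpleGraph (Fin n)) [DecidableRel G.Adj]

lemma fqSet_nonneg {u x : ℝ} (hx : x ∈ fqSet G u) : 0 ≤ x := by
  obtain ⟨d, hd, P, ρ, hP, hρ, htr, hcomm, hval, hs⟩ := hx
  have h : (0 : ℂ) ≤ (x : ℂ) := by
    rw [hs]
    refine Finset.sum_nonneg fun vw _ => ?_
    exact trace_nonneg_of_comm hρ (hP vw.1).1 (hP vw.1).2 (hP vw.2).1 (hP vw.2).2 (hcomm vw.1)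
  exact Complex.zero_le_real.mp h

lemma fqSet_bddBelow (u : ℝ) : BddBelow (fqSet G u) :=
  ⟨0, fun _ hx => fqSet_nonneg G hx⟩

/-- Builder: any witness over an arbitrary nonempty fintype index gives membership in `fqSet`. -/
lemma mem_fqSet_of_fintype {m : Type} [Fintype m] [DecidableEq m] [Nonempty m]
    (P : Fin n → Matrix m m ℂ) (ρ : Matrix m m ℂ) (t s : ℝ)
    (hP : ∀ v, (P v).IsHermitian) (hP2 : ∀ v, P v * P v = P v)
    (hρ : ρ.PosSemidef) (htr : ρ.trace = 1)
    (hcomm : ∀ v, ρ * P v = P v * ρ) (hval : ∀ v, (ρ * P v).trace = (t : ℂ))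
    (hs : (s : ℂ) = ∑ vw ∈ edgeFinset' G, (ρ * P vw.1 * P vw.2).trace) :
    s ∈ fqSet G t := by
  classical
  set d := Fintype.card m with hdd
  have hd : 1 ≤ d := Fintype.card_pos
  let e : Fin d ≃ m := (Fintype.equivFin m).symm
  let T : Matrix m m ℂ → Matrix (Fin d) (Fin d) ℂ := fun M => M.submatrix e e
  have Tmul : ∀ A B : Matrix m m ℂ, T A * T B = T (A * B) := fun A B =>
    Matrix.submatrix_mul_equiv A B e e e
  have Ttr : ∀ A : Matrix m m ℂ, (T A).trace = A.trace := fun A => by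
    simpa [Matrix.trace, Matrix.diag, T, Matrix.submatrix_apply] using
      Equiv.sum_comp e fun j => A j j
  have Tct : ∀ A : Matrix m m ℂ, (T A)ᴴ = T Aᴴ := fun A => by
    simp [T, Matrix.conjTranspose_submatrix]
  have Tpsd : ∀ A : Matrix m m ℂ, A.PosSemidef → (T A).PosSemidef := by
    intro A hA
    obtain ⟨B, rfl⟩ := Matrix.posSemidef_iff_eq_transpose_mul_self.mp hA
    rw [← Tmul, ← Tct]
    exact Matrix.posSemidef_conjTranspose_mul_self _
  refine ⟨d, hd, fun v => T (P v), T ρ, fun v => ⟨?_, ?_⟩, Tpsd ρ hρ, ?_, ?_, ?_, ?_⟩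
  · rw [Matrix.IsHermitian, Tct, (hP v).eq]
  · rw [Tmul, hP2 v]
  · rw [Ttr, htr]
  · intro v; rw [Tmul, Tmul, hcomm v]
  · intro v; rw [Tmul, Ttr, hval v]
  · rw [hs]
    refine Finset.sum_congr rfl fun vw _ => ?_
    rw [Tmul, Tmul, Ttr]

end FqBasic
section Combine

lemma trace_fromBlocks' {l m α : Type*} [Fintype l] [Fintype m] [AddCommMonoid α]
    (A : Matrix l l α) (B : Matrix l m α) (C : Matrix m l α) (D : Matrix m m α) :
    (Matrix.fromBlocks A B C D).trace = A.trace + D.trace := by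
  simp [Matrix.trace, Matrix.diag, Fintype.sum_sum_type, Matrix.fromBlocks]

variable {n : ℕ} (G : SimpleGraph (Fin n)) [DecidableRel G.Adj]

lemma smul_conj_mul {d : ℕ} (c : ℝ) (B : Matrix (Fin d) (Fin d) ℂ) :
    ((c : ℂ) • B)ᴴ * ((c : ℂ) • B) = ((c ^ 2 : ℝ) : ℂ) • (Bᴴ * B) := by
  rw [Matrix.conjTranspose_smul, Matrix.smul_mul, Matrix.mul_smul, smul_smul]
  congr 1
  rw [Complex.star_def, Complex.conj_ofReal]
  push_cast
  ring

lemma fqSet_combine {u₁ u₂ x₁ x₂ : ℝ} (μ : ℝ) (h0 : 0 ≤ μ) (h1 : μ ≤ 1)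
    (hx₁ : x₁ ∈ fqSet G u₁) (hx₂ : x₂ ∈ fqSet G u₂) :
    μ * x₁ + (1 - μ) * x₂ ∈ fqSet G (μ * u₁ + (1 - μ) * u₂) := by
  classical
  obtain ⟨d₁, hd₁, P₁, ρ₁, hP₁, hρ₁, htr₁, hcomm₁, hval₁, hs₁⟩ := hx₁
  obtain ⟨d₂, hd₂, P₂, ρ₂, hP₂, hρ₂, htr₂, hcomm₂, hval₂, hs₂⟩ := hx₂
  have : Nonempty (Fin d₁ ⊕ Fin d₂) := ⟨Sum.inl ⟨0, hd₁⟩⟩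
  set P : Fin n → Matrix (Fin d₁ ⊕ Fin d₂) (Fin d₁ ⊕ Fin d₂) ℂ :=
    fun v => Matrix.fromBlocks (P₁ v) 0 0 (P₂ v) with hPdef
  set ρ : Matrix (Fin d₁ ⊕ Fin d₂) (Fin d₁ ⊕ Fin d₂) ℂ :=
    Matrix.fromBlocks ((μ : ℂ) • ρ₁) 0 0 (((1 - μ : ℝ) : ℂ) • ρ₂) with hρdef
  have hρP : ∀ v, ρ * P v =
      Matrix.fromBlocks ((μ : ℂ) • (ρ₁ * P₁ v)) 0 0 (((1 - μ : ℝ) : ℂ) • (ρ₂ * P₂ v)) := by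
    intro v
    rw [hρdef, hPdef, Matrix.fromBlocks_multiply]
    simp only [Matrix.mul_zero, Matrix.zero_mul, add_zero, zero_add, Matrix.smul_mul, smul_zero]
  refine mem_fqSet_of_fintype G P ρ _ _ ?_ ?_ ?_ ?_ ?_ ?_ ?_
  · intro v
    show (Matrix.fromBlocks (P₁ v) 0 0 (P₂ v))ᴴ = Matrix.fromBlocks (P₁ v) 0 0 (P₂ v)
    rw [Matrix.fromBlocks_conjTranspose, Matrix.conjTranspose_zero, Matrix.conjTranspose_zero,
      (hP₁ v).1.eq, (hP₂ v).1.eq]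
  · intro v
    rw [hPdef]
    simp only [Matrix.fromBlocks_multiply, Matrix.mul_zero, Matrix.zero_mul, add_zero, zero_add,
      (hP₁ v).2, (hP₂ v).2]
  · obtain ⟨B₁, hB₁⟩ := Matrix.posSemidef_iff_eq_transpose_mul_self.mp hρ₁
    obtain ⟨B₂, hB₂⟩ := Matrix.posSemidef_iff_eq_transpose_mul_self.mp hρ₂
    rw [Matrix.posSemidef_iff_eq_transpose_mul_self]
    refine ⟨Matrix.fromBlocks ((Real.sqrt μ : ℂ) • B₁) 0 0 ((Real.sqrt (1 - μ) : ℂ) • B₂), ?_⟩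
    rw [hρdef, Matrix.fromBlocks_conjTranspose, Matrix.fromBlocks_multiply]
    simp only [Matrix.conjTranspose_zero, Matrix.mul_zero, Matrix.zero_mul, add_zero, zero_add,
      smul_conj_mul, Real.sq_sqrt h0, Real.sq_sqrt (by linarith : (0:ℝ) ≤ 1 - μ), hB₁, hB₂]
  · rw [hρdef, trace_fromBlocks', Matrix.trace_smul, Matrix.trace_smul, htr₁, htr₂]
    simp
  · intro v
    rw [hρP v, hρdef, hPdef, Matrix.fromBlocks_multiply]
    simp only [Matrix.mul_zero, Matrix.zero_mul, add_zero, zero_add, Matrix.mul_smul, smul_zero,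
      hcomm₁ v, hcomm₂ v]
  · intro v
    rw [hρP v, trace_fromBlocks', Matrix.trace_smul, Matrix.trace_smul, hval₁ v, hval₂ v]
    push_cast
    simp [smul_eq_mul]
  · have hterm : ∀ vw ∈ edgeFinset' G, (ρ * P vw.1 * P vw.2).trace =
        (μ : ℂ) * (ρ₁ * P₁ vw.1 * P₁ vw.2).trace
          + ((1 - μ : ℝ) : ℂ) * (ρ₂ * P₂ vw.1 * P₂ vw.2).trace := by
      intro vw _
      rw [hρP vw.1, hPdef, Matrix.fromBlocks_multiply]
      simp only [Matrix.mul_zero, Matrix.zero_mul, add_zero, zero_add, Matrix.smul_mul, smul_zero]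
      rw [trace_fromBlocks', Matrix.trace_smul, Matrix.trace_smul]
      simp [smul_eq_mul]
    rw [Finset.sum_congr rfl hterm, Finset.sum_add_distrib, ← Finset.mul_sum, ← Finset.mul_sum,
      ← hs₁, ← hs₂]
    push_cast
    ring

end Combine
section Convex

variable {n : ℕ} (G : SimpleGraph (Fin n)) [DecidableRel G.Adj]

lemma fq_convex {u₁ u₂ : ℝ} (h₁ : (fqSet G u₁).Nonempty) (h₂ : (fqSet G u₂).Nonempty)
    {μ : ℝ} (h0 : 0 ≤ μ) (h1 : μ ≤ 1) :
    fq G (μ * u₁ + (1 - μ) * u₂) ≤ μ * fq G u₁ + (1 - μ) * fq G u₂ := by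
  refine le_of_forall_pos_le_add fun ε hε => ?_
  obtain ⟨x₁, hx₁, hlt₁⟩ := Real.lt_sInf_add_pos h₁ (half_pos hε)
  obtain ⟨x₂, hx₂, hlt₂⟩ := Real.lt_sInf_add_pos h₂ (half_pos hε)
  have hle : fq G (μ * u₁ + (1 - μ) * u₂) ≤ μ * x₁ + (1 - μ) * x₂ :=
    csInf_le (fqSet_bddBelow G _) (fqSet_combine G μ h0 h1 hx₁ hx₂)
  have e₁ : μ * x₁ ≤ μ * (fq G u₁ + ε / 2) := by
    apply mul_le_mul_of_nonneg_left _ h0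
    exact le_of_lt hlt₁
  have e₂ : (1 - μ) * x₂ ≤ (1 - μ) * (fq G u₂ + ε / 2) := by
    apply mul_le_mul_of_nonneg_left _ (by linarith)
    exact le_of_lt hlt₂
  nlinarith [hle, e₁, e₂]

end Convex
section Symmetrize

variable {n : ℕ} (G : SimpleGraph (Fin n)) [DecidableRel G.Adj]

lemma isGraphAut_one : IsGraphAut G 1 := fun v w => by simp

lemma isGraphAut_mul {π σ : Equiv.Perm (Fin n)} (hπ : IsGraphAut G π) (hσ : IsGraphAut G σ) :
    IsGraphAut G (π * σ) := fun v w => (hσ v w).trans (hπ (σ v) (σ w))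

lemma isGraphAut_inv {π : Equiv.Perm (Fin n)} (hπ : IsGraphAut G π) : IsGraphAut G π⁻¹ := by
  intro v w
  have := hπ (π⁻¹ v) (π⁻¹ w)
  simpa using this.symm

lemma sum_edge_perm {π : Equiv.Perm (Fin n)} (hπ : IsGraphAut G π) (g : Fin n → Fin n → ℂ) :
    ∑ vw ∈ edgeFinset' G, g (π vw.1) (π vw.2) = ∑ vw ∈ edgeFinset' G, g vw.1 vw.2 := by
  refine Finset.sum_nbij' (fun vw => (π vw.1, π vw.2)) (fun vw => (π⁻¹ vw.1, π⁻¹ vw.2))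
    ?_ ?_ ?_ ?_ ?_
  · intro vw hvw
    simp only [edgeFinset', Finset.mem_filter, Finset.mem_univ, true_and] at hvw ⊢
    exact (hπ vw.1 vw.2).mp hvw
  · intro vw hvw
    simp only [edgeFinset', Finset.mem_filter, Finset.mem_univ, true_and] at hvw ⊢
    exact (isGraphAut_inv G hπ vw.1 vw.2).mp hvw
  · intro vw _; simp
  · intro vw _; simp
  · intro vw _; rfl

lemma aut_count (hn : 1 ≤ n) (hvt : VertexTransitive G) (A : Finset (Equiv.Perm (Fin n)))
    (hA : ∀ π, π ∈ A ↔ IsGraphAut G π) (v : Fin n) (f : Fin n → ℂ) :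
    (n : ℂ) * ∑ π ∈ A, f (π v) = (A.card : ℂ) * ∑ w, f w := by
  classical
  set k : Fin n → ℕ := fun w => (A.filter fun π => π v = w).card with hk
  have hkc : ∀ w w', k w = k w' := by
    intro w w'
    obtain ⟨σ, hσa, hσw⟩ := hvt w w'
    refine Finset.card_bij' (fun π _ => σ * π) (fun τ _ => σ⁻¹ * τ) ?_ ?_ ?_ ?_
    · intro π hπ
      simp only [Finset.mem_filter] at hπ ⊢
      exact ⟨(hA _).mpr (isGraphAut_mul G hσa ((hA _).mp hπ.1)),
        by simp [Equiv.Perm.mul_apply, hπ.2, hσw]⟩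
    · intro τ hτ
      simp only [Finset.mem_filter] at hτ ⊢
      refine ⟨(hA _).mpr (isGraphAut_mul G (isGraphAut_inv G hσa) ((hA _).mp hτ.1)), ?_⟩
      simp only [Equiv.Perm.mul_apply, hτ.2]
      rw [← hσw]; simp
    · intro π _; simp [mul_assoc]
    · intro τ _; simp [← mul_assoc]
  have hsum1 : ∑ w, k w = A.card :=
    (Finset.card_eq_sum_card_fiberwise (fun π _ => Finset.mem_univ (π v))).symm
  have hsum2 : ∑ π ∈ A, f (π v) = ∑ w, (k w : ℂ) * f w := by
    rw [← Finset.sum_fiberwise A (fun π => π v) (fun π => f (π v))]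
    refine Finset.sum_congr rfl fun w _ => ?_
    rw [Finset.sum_congr rfl (fun π hπ => ?_), Finset.sum_const, nsmul_eq_mul]
    exact congrArg f (Finset.mem_filter.mp hπ).2
  have w₀ : Fin n := ⟨0, hn⟩
  have hkconst : ∀ w, k w = k w₀ := fun w => hkc w w₀
  have hcard : A.card = n * k w₀ := by
    rw [← hsum1, Finset.sum_congr rfl fun w _ => hkconst w, Finset.sum_const]
    simp [mul_comm]
  rw [hsum2, Finset.sum_congr rfl fun w _ => by rw [hkconst w], ← Finset.mul_sum, hcard]
  push_cast
  ring

end Symmetrize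
section Sym2

open Matrix

variable {n : ℕ} (G : SimpleGraph (Fin n)) [DecidableRel G.Adj]

lemma smul_conj_mul' {k : Type*} [Fintype k] (c : ℝ) (B : Matrix k k ℂ) :
    ((c : ℂ) • B)ᴴ * ((c : ℂ) • B) = ((c ^ 2 : ℝ) : ℂ) • (Bᴴ * B) := by
  rw [Matrix.conjTranspose_smul, Matrix.smul_mul, Matrix.mul_smul, smul_smul]
  congr 1
  rw [Complex.star_def, Complex.conj_ofReal]
  push_cast
  ring

set_option maxHeartbeats 1600000 in
lemma fq_symmetrize (hn : 1 ≤ n) (hvt : VertexTransitive G)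
    {d : ℕ} (hd : 1 ≤ d) (P : Fin n → Matrix (Fin d) (Fin d) ℂ) (ρ : Matrix (Fin d) (Fin d) ℂ)
    (hP : ∀ v, IsProjMat (P v)) (hρ : ρ.PosSemidef) (htr : ρ.trace = 1)
    (hcomm : ∀ v, ρ * P v = P v * ρ) (tv : Fin n → ℝ)
    (hval : ∀ v, (ρ * P v).trace = ((tv v : ℝ) : ℂ))
    (s : ℝ) (hs : (s : ℂ) = ∑ vw ∈ edgeFinset' G, (ρ * P vw.1 * P vw.2).trace) :
    s ∈ fqSet G ((∑ v, tv v) / n) := by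
  classical
  set A : Finset (Equiv.Perm (Fin n)) := Finset.univ.filter (fun π => IsGraphAut G π) with hAdef
  have hA : ∀ π, π ∈ A ↔ IsGraphAut G π := by
    intro π; simp [hAdef]
  have h1A : (1 : Equiv.Perm (Fin n)) ∈ A := (hA 1).mpr (isGraphAut_one G)
  set N : ℕ := A.card with hN
  have hNpos : 0 < N := Finset.card_pos.mpr ⟨1, h1A⟩
  have hNC : ((N : ℝ) : ℂ) ≠ 0 := by
    simp only [ne_eq, Complex.ofReal_natCast, Nat.cast_eq_zero]
    omega
  have hnC : ((n : ℝ) : ℂ) ≠ 0 := by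
    simp only [ne_eq, Complex.ofReal_natCast, Nat.cast_eq_zero]
    omega
  set c : ℝ := (N : ℝ)⁻¹ with hc
  haveI : Nonempty {π // π ∈ A} := ⟨⟨1, h1A⟩⟩
  haveI : Nonempty (Fin d × {π // π ∈ A}) := ⟨⟨⟨0, hd⟩, ⟨1, h1A⟩⟩⟩
  set P' : Fin n → Matrix (Fin d × {π // π ∈ A}) (Fin d × {π // π ∈ A}) ℂ :=
    fun v => Matrix.blockDiagonal (fun π : {π // π ∈ A} => P (π.1 v)) with hP'def
  set ρ' : Matrix (Fin d × {π // π ∈ A}) (Fin d × {π // π ∈ A}) ℂ :=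
    Matrix.blockDiagonal (fun _ : {π // π ∈ A} => (c : ℂ) • ρ) with hρ'def
  have hmulv : ∀ v, ρ' * P' v =
      Matrix.blockDiagonal (fun π : {π // π ∈ A} => (c : ℂ) • (ρ * P (π.1 v))) := by
    intro v
    rw [hρ'def, hP'def, ← Matrix.blockDiagonal_mul]
    exact congrArg _ (funext fun k => Matrix.smul_mul _ _ _)
  have hmul2 : ∀ v w, ρ' * P' v * P' w =
      Matrix.blockDiagonal (fun π : {π // π ∈ A} => (c : ℂ) • (ρ * P (π.1 v) * P (π.1 w))) := by
    intro v w
    rw [hmulv v, hP'def, ← Matrix.blockDiagonal_mul]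
    exact congrArg _ (funext fun k => Matrix.smul_mul _ _ _)
  refine mem_fqSet_of_fintype G P' ρ' _ _ ?_ ?_ ?_ ?_ ?_ ?_ ?_
  · intro v
    show (Matrix.blockDiagonal fun π : {π // π ∈ A} => P (π.1 v))ᴴ
        = Matrix.blockDiagonal fun π : {π // π ∈ A} => P (π.1 v)
    rw [Matrix.blockDiagonal_conjTranspose]
    exact congrArg _ (funext fun k => (hP (k.1 v)).1.eq)
  · intro v
    show (Matrix.blockDiagonal fun π : {π // π ∈ A} => P (π.1 v))
        * (Matrix.blockDiagonal fun π : {π // π ∈ A} => P (π.1 v)) = _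
    rw [← Matrix.blockDiagonal_mul]
    exact congrArg _ (funext fun k => (hP (k.1 v)).2)
  · obtain ⟨B, hB⟩ := Matrix.posSemidef_iff_eq_transpose_mul_self.mp hρ
    rw [Matrix.posSemidef_iff_eq_transpose_mul_self]
    refine ⟨Matrix.blockDiagonal (fun _ : {π // π ∈ A} => (Real.sqrt c : ℂ) • B), ?_⟩
    rw [hρ'def, Matrix.blockDiagonal_conjTranspose, ← Matrix.blockDiagonal_mul]
    exact congrArg _ (funext fun k => by
      rw [smul_conj_mul', Real.sq_sqrt (by positivity), hB])
  · rw [hρ'def, Matrix.trace_blockDiagonal]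
    simp only [Matrix.trace_smul, htr, smul_eq_mul, mul_one, Finset.sum_const, Finset.card_univ,
      Fintype.card_coe, nsmul_eq_mul]
    rw [← hN, hc]
    push_cast
    field_simp
  · intro v
    rw [hmulv v, hP'def, hρ'def, ← Matrix.blockDiagonal_mul]
    exact congrArg _ (funext fun k => by
      rw [Matrix.mul_smul, ← hcomm (k.1 v), ← Matrix.smul_mul])
  · intro v
    rw [hmulv v, Matrix.trace_blockDiagonal]
    have hterm : ∀ π : {π // π ∈ A}, ((c : ℂ) • (ρ * P (π.1 v))).trace
        = (c : ℂ) * ((tv (π.1 v) : ℝ) : ℂ) := fun π => by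
      rw [Matrix.trace_smul, hval (π.1 v), smul_eq_mul]
    rw [Finset.sum_congr rfl fun π _ => hterm π,
      Finset.sum_coe_sort A (fun π => (c : ℂ) * ((tv (π v) : ℝ) : ℂ)), ← Finset.mul_sum]
    have hcount := aut_count G hn hvt A hA v (fun w => ((tv w : ℝ) : ℂ))
    rw [← hN] at hcount
    have hrhs : ((((∑ w, tv w) / n : ℝ)) : ℂ) = (∑ w, ((tv w : ℝ) : ℂ)) / ((n : ℝ) : ℂ) := by
      push_cast; ring
    rw [hrhs, hc]
    push_cast at hcount ⊢
    field_simp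
    linear_combination hcount
  · rw [Finset.sum_congr rfl fun vw hvw => by rw [hmul2 vw.1 vw.2, Matrix.trace_blockDiagonal]]
    rw [Finset.sum_comm]
    have hinner : ∀ π : {π // π ∈ A},
        ∑ vw ∈ edgeFinset' G, ((c : ℂ) • (ρ * P (π.1 vw.1) * P (π.1 vw.2))).trace
          = (c : ℂ) * (s : ℂ) := by
      intro π
      have := sum_edge_perm G ((hA π.1).mp π.2) (fun a b => (ρ * P a * P b).trace)
      calc ∑ vw ∈ edgeFinset' G, ((c : ℂ) • (ρ * P (π.1 vw.1) * P (π.1 vw.2))).trace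
          = (c : ℂ) * ∑ vw ∈ edgeFinset' G, (ρ * P (π.1 vw.1) * P (π.1 vw.2)).trace := by
            rw [Finset.mul_sum]
            exact Finset.sum_congr rfl fun vw _ => by rw [Matrix.trace_smul, smul_eq_mul]
        _ = (c : ℂ) * (s : ℂ) := by rw [this, ← hs]
    rw [Finset.sum_congr rfl fun π _ => hinner π, Finset.sum_const, Finset.card_univ,
      Fintype.card_coe, ← hN, nsmul_eq_mul, hc]
    push_cast
    field_simp

end Sym2
section Phi

open Matrix

variable {k : Type*} [Fintype k] [DecidableEq k]

/-- Apply a real function to a Hermitian matrix through its spectral decomposition. -/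
noncomputable def phi {ρ : Matrix k k ℂ} (hρ : ρ.IsHermitian) (f : ℝ → ℝ) : Matrix k k ℂ :=
  (hρ.eigenvectorUnitary : Matrix k k ℂ) *
    Matrix.diagonal (fun i => ((f (hρ.eigenvalues i) : ℝ) : ℂ)) *
    (star (hρ.eigenvectorUnitary : Matrix k k ℂ))

variable {ρ : Matrix k k ℂ} (hρ : ρ.IsHermitian)

private lemma phi_u_mul_star :
    (hρ.eigenvectorUnitary : Matrix k k ℂ) * star (hρ.eigenvectorUnitary : Matrix k k ℂ) = 1 :=
  Matrix.mem_unitaryGroup_iff.mp hρ.eigenvectorUnitary.2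

private lemma phi_star_mul_u :
    star (hρ.eigenvectorUnitary : Matrix k k ℂ) * (hρ.eigenvectorUnitary : Matrix k k ℂ) = 1 :=
  Matrix.mem_unitaryGroup_iff'.mp hρ.eigenvectorUnitary.2

private lemma phi_cancel1 (X : Matrix k k ℂ) :
    (hρ.eigenvectorUnitary : Matrix k k ℂ) *
      (star (hρ.eigenvectorUnitary : Matrix k k ℂ) * X) = X := by
  rw [← mul_assoc, phi_u_mul_star, one_mul]

private lemma phi_cancel2 (X : Matrix k k ℂ) :
    star (hρ.eigenvectorUnitary : Matrix k k ℂ) *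
      ((hρ.eigenvectorUnitary : Matrix k k ℂ) * X) = X := by
  rw [← mul_assoc, phi_star_mul_u, one_mul]

lemma phi_mul (f g : ℝ → ℝ) :
    phi hρ f * phi hρ g = phi hρ (fun x => f x * g x) := by
  unfold phi
  simp only [Matrix.mul_assoc]
  rw [phi_cancel2 hρ]
  rw [← Matrix.mul_assoc (Matrix.diagonal _) (Matrix.diagonal _), Matrix.diagonal_mul_diagonal]
  congr 2
  funext i
  push_cast
  ring

lemma phi_add (f g : ℝ → ℝ) :
    phi hρ f + phi hρ g = phi hρ (fun x => f x + g x) := by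
  unfold phi
  rw [← Matrix.add_mul, ← Matrix.mul_add, Matrix.diagonal_add]
  congr 2
  funext i
  push_cast
  ring

lemma phi_smul (a : ℝ) (f : ℝ → ℝ) :
    phi hρ (fun x => a * f x) = (a : ℂ) • phi hρ f := by
  unfold phi
  have hdiag : (Matrix.diagonal fun i => ((a * f (hρ.eigenvalues i) : ℝ) : ℂ))
      = (a : ℂ) • Matrix.diagonal (fun i => ((f (hρ.eigenvalues i) : ℝ) : ℂ)) := by
    have hfun : (fun i => ((a * f (hρ.eigenvalues i) : ℝ) : ℂ))
        = (a : ℂ) • (fun i => ((f (hρ.eigenvalues i) : ℝ) : ℂ)) := by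
      funext i
      push_cast
      simp [smul_eq_mul]
    rw [hfun, Matrix.diagonal_smul]
  rw [hdiag, Matrix.mul_smul, Matrix.smul_mul]

lemma phi_trace (f : ℝ → ℝ) :
    (phi hρ f).trace = ((∑ i, f (hρ.eigenvalues i) : ℝ) : ℂ) := by
  unfold phi
  rw [Matrix.trace_mul_cycle, phi_star_mul_u hρ, one_mul, Matrix.trace_diagonal]
  push_cast
  rfl

lemma phi_id : phi hρ id = ρ := by
  unfold phi
  have h := hρ.spectral_theorem
  rw [Unitary.conjStarAlgAut_apply] at h
  conv_rhs => rw [h]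
  rfl

lemma phi_herm (f : ℝ → ℝ) : (phi hρ f).IsHermitian := by
  show _ᴴ = _
  unfold phi
  rw [Matrix.conjTranspose_mul, Matrix.conjTranspose_mul, Matrix.diagonal_conjTranspose]
  rw [← Matrix.star_eq_conjTranspose, star_star, ← Matrix.star_eq_conjTranspose]
  rw [Matrix.mul_assoc]
  congr 2
  funext i
  simp [Pi.star_def, Complex.conj_ofReal]

lemma phi_psd (f : ℝ → ℝ) (hf : ∀ i, 0 ≤ f (hρ.eigenvalues i)) : (phi hρ f).PosSemidef := by
  unfold phi
  have hdiag : (Matrix.diagonal (fun i => ((f (hρ.eigenvalues i) : ℝ) : ℂ))).PosSemidef := by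
    rw [Matrix.posSemidef_diagonal_iff]
    intro i
    exact Complex.zero_le_real.mpr (hf i)
  have := hdiag.mul_mul_conjTranspose_same (hρ.eigenvectorUnitary : Matrix k k ℂ)
  rwa [← Matrix.star_eq_conjTranspose] at this

lemma phi_comm (f : ℝ → ℝ) {B : Matrix k k ℂ} (hB : ρ * B = B * ρ) :
    phi hρ f * B = B * phi hρ f := by
  set u : Matrix k k ℂ := (hρ.eigenvectorUnitary : Matrix k k ℂ) with hu
  set B' : Matrix k k ℂ := star u * B * u with hB'
  set lam := hρ.eigenvalues with hlam
  set D : Matrix k k ℂ := Matrix.diagonal (fun i => ((lam i : ℝ) : ℂ)) with hD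
  set Df : Matrix k k ℂ := Matrix.diagonal (fun i => ((f (lam i) : ℝ) : ℂ)) with hDf
  have hspec : ρ = u * D * star u := hρ.spectral_theorem
  have h1 : D = star u * ρ * u := by
    rw [hspec]
    simp only [Matrix.mul_assoc]
    rw [phi_star_mul_u hρ, mul_one, phi_cancel2 hρ]
  have hDB : D * B' = B' * D := by
    rw [h1, hB']
    simp only [Matrix.mul_assoc]
    rw [phi_cancel1 hρ, phi_cancel1 hρ, ← Matrix.mul_assoc ρ B, hB, Matrix.mul_assoc]
  have hent : ∀ i j, ((lam i : ℝ) : ℂ) * B' i j = B' i j * ((lam j : ℝ) : ℂ) := by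
    intro i j
    have := congrArg (fun M : Matrix k k ℂ => M i j) hDB
    simpa [hD, Matrix.diagonal_mul, Matrix.mul_diagonal] using this
  have hDfB : Df * B' = B' * Df := by
    ext i j
    rw [hDf]
    simp only [Matrix.diagonal_mul, Matrix.mul_diagonal]
    by_cases h : lam i = lam j
    · rw [h, mul_comm]
    · have hzero : B' i j = 0 := by
        have h2 := hent i j
        rw [mul_comm (B' i j) _] at h2
        have h3 : (((lam i : ℝ) : ℂ) - ((lam j : ℝ) : ℂ)) * B' i j = 0 := by
          rw [sub_mul, h2, sub_self]
        rcases mul_eq_zero.mp h3 with h4 | h4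
        · exact absurd (by exact_mod_cast sub_eq_zero.mp h4) h
        · exact h4
      rw [hzero, mul_zero, zero_mul]
  have hBrec : B = u * B' * star u := by
    rw [hB']
    simp only [Matrix.mul_assoc]
    rw [phi_cancel1 hρ, phi_u_mul_star hρ, mul_one]
  have hphi : phi hρ f = u * Df * star u := rfl
  rw [hphi]
  conv_lhs => rw [hBrec]
  conv_rhs => rw [hBrec]
  simp only [Matrix.mul_assoc]
  rw [phi_cancel2 hρ, phi_cancel2 hρ, ← Matrix.mul_assoc Df B', hDfB, Matrix.mul_assoc]

/-- The trace of a Hermitian idempotent matrix is a natural number. -/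
lemma proj_trace_nat {Q : Matrix k k ℂ} (hQ : Q.IsHermitian) (hQ2 : Q * Q = Q) :
    ∃ m : ℕ, Q.trace = (m : ℂ) := by
  classical
  set ν := hQ.eigenvalues with hν
  have heig : ∀ i, ν i = 0 ∨ ν i = 1 := by
    intro i
    set v : k → ℂ := ⇑(hQ.eigenvectorBasis i) with hv
    have hvec : Q *ᵥ v = (ν i : ℝ) • v := hQ.mulVec_eigenvectorBasis i
    have hv2 : Q *ᵥ (Q *ᵥ v) = ((ν i * ν i : ℝ)) • v := by
      rw [hvec, Matrix.mulVec_smul, hvec, smul_smul]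
    have hQQ : Q *ᵥ (Q *ᵥ v) = (ν i : ℝ) • v := by
      rw [Matrix.mulVec_mulVec, hQ2, hvec]
    have hvne : v ≠ 0 := by
      intro h0
      have hb := hQ.eigenvectorBasis.orthonormal.1 i
      have hz : (hQ.eigenvectorBasis i : EuclideanSpace ℂ k) = 0 := by
        apply PiLp.ext
        intro x
        exact congrFun h0 x
      rw [hz] at hb
      simp at hb
    obtain ⟨x, hx⟩ : ∃ x, v x ≠ 0 := by
      by_contra h
      push_neg at h
      exact hvne (funext h)
    have hcanc : ((ν i * ν i : ℝ) : ℂ) * v x = ((ν i : ℝ) : ℂ) * v x := by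
      have := congrFun (hv2.symm.trans hQQ) x
      simpa [Pi.smul_apply, Complex.real_smul] using this
    have hre : ν i * ν i = ν i := by
      have := mul_right_cancel₀ hx hcanc
      exact_mod_cast this
    have h0 : ν i * (ν i - 1) = 0 := by nlinarith [hre]
    rcases mul_eq_zero.mp h0 with h | h
    · exact Or.inl h
    · exact Or.inr (by linarith [sub_eq_zero.mp h])
  have htrace : Q.trace = ((∑ i, ν i : ℝ) : ℂ) := by
    have := phi_trace hQ id
    rwa [phi_id hQ] at this
  refine ⟨(Finset.univ.filter fun i => ν i = 1).card, ?_⟩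
  rw [htrace]
  have hsum : (∑ i, ν i) = ∑ i, (if ν i = 1 then (1 : ℝ) else 0) :=
    Finset.sum_congr rfl (fun i _ => by rcases heig i with h | h <;> simp [h])
  rw [hsum, Finset.sum_boole]
  push_cast
  rfl

end Phi
section Perturb

open Matrix

variable {n : ℕ} (G : SimpleGraph (Fin n)) [DecidableRel G.Adj]

set_option maxHeartbeats 1600000 in
lemma exists_linear_family (hn : 1 ≤ n) (hvt : VertexTransitive G)
    (t : ℝ) (hirr : Irrational t) (hattained : fq G t ∈ fqSet G t) :
    ∃ (ε₀ c κ : ℝ), 0 < ε₀ ∧ c ≠ 0 ∧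
      ∀ ε : ℝ, |ε| ≤ ε₀ → (fq G t + ε * κ) ∈ fqSet G (t + ε * c) := by
  classical
  obtain ⟨d, hd, P, ρ, hP, hρ, htr, hcomm, hval, hs⟩ := hattained
  have hH : ρ.IsHermitian := hρ.1
  set lam := hH.eigenvalues with hlam
  have hlam0 : ∀ i, 0 ≤ lam i := hρ.eigenvalues_nonneg
  have hsum1 : (∑ i, lam i) = 1 := by
    have h1 := phi_trace hH id
    rw [phi_id hH, htr] at h1
    have h2 : (∑ i, id (lam i)) = 1 := by exact_mod_cast h1.symm
    simpa using h2
  have hex : ∃ i, 0 < lam i := by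
    by_contra h
    push_neg at h
    have h0 : (∑ i, lam i) = 0 :=
      le_antisymm (Finset.sum_nonpos fun i _ => h i) (Finset.sum_nonneg fun i _ => hlam0 i)
    rw [hsum1] at h0
    norm_num at h0
  obtain ⟨i₀, hi₀⟩ := hex
  set μ₀ := lam i₀ with hμ₀
  set f : ℝ → ℝ := fun x => if x = μ₀ then 1 else 0 with hf
  set E := phi hH f with hE
  set r : ℕ := (Finset.univ.filter fun i => lam i = μ₀).card with hr
  have hr1 : 1 ≤ r := Finset.card_pos.mpr ⟨i₀, by simp [hr, hμ₀]⟩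
  have hrR : (0 : ℝ) < r := by exact_mod_cast hr1
  have hfsum : (∑ i, f (lam i)) = (r : ℝ) := by
    have : (∑ i, f (lam i)) = ∑ i, (if lam i = μ₀ then (1 : ℝ) else 0) := rfl
    rw [this, Finset.sum_boole, hr]
  have hEtr : E.trace = ((r : ℝ) : ℂ) := by
    rw [hE, phi_trace hH f, hfsum]
  have hEherm : E.IsHermitian := phi_herm hH f
  have hEidem : E * E = E := by
    rw [hE, phi_mul]
    exact congrArg (phi hH) (funext fun x => by by_cases h : x = μ₀ <;> simp [hf, h])
  have hEpsd : E.PosSemidef := by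
    refine phi_psd hH f fun i => ?_
    simp only [hf]
    split_ifs <;> norm_num
  have hEcomm : ∀ v, E * P v = P v * E := fun v => phi_comm hH f (hcomm v)
  have hQherm : ∀ v, (E * P v).IsHermitian := by
    intro v
    show _ᴴ = _
    rw [Matrix.conjTranspose_mul, (hP v).1.eq, hEherm.eq, ← hEcomm v]
  have hQidem : ∀ v, (E * P v) * (E * P v) = E * P v := by
    intro v
    calc E * P v * (E * P v) = E * (P v * E) * P v := by noncomm_ring
      _ = E * (E * P v) * P v := by rw [← hEcomm v]
      _ = (E * E) * (P v * P v) := by noncomm_ring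
      _ = E * P v := by rw [hEidem, (hP v).2]
  have hsv : ∀ v, ∃ m : ℕ, (E * P v).trace = (m : ℂ) := fun v =>
    proj_trace_nat (hQherm v) (hQidem v)
  choose sval hsval using hsv
  -- nonnegative total edge weight for E
  have hWpos : (0 : ℂ) ≤ ∑ vw ∈ edgeFinset' G, (E * P vw.1 * P vw.2).trace := by
    refine Finset.sum_nonneg fun vw _ => ?_
    exact trace_nonneg_of_comm hEpsd (hP vw.1).1 (hP vw.1).2 (hP vw.2).1 (hP vw.2).2 (hEcomm vw.1)
  set W : ℂ := ∑ vw ∈ edgeFinset' G, (E * P vw.1 * P vw.2).trace with hWdef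
  set w₁ : ℝ := W.re with hw₁
  have hW : W = ((w₁ : ℝ) : ℂ) := cx_nonneg_eq_re hWpos
  -- the slope data
  set Sn : ℝ := ∑ v, ((sval v : ℕ) : ℝ) with hSn
  set c : ℝ := Sn / n - (r : ℝ) * t with hc
  set κ : ℝ := w₁ - (r : ℝ) * fq G t with hκ
  set ε₀ : ℝ := min (μ₀ / 2) (1 / (2 * r)) with hε₀
  have hε₀pos : 0 < ε₀ := by
    apply lt_min
    · linarith
    · exact div_pos one_pos (by linarith)
  have hcne : c ≠ 0 := by
    intro h0
    apply hirr
    refine ⟨((∑ v, sval v : ℕ) : ℚ) / ((n * r : ℕ) : ℚ), ?_⟩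
    have hSn' : Sn = ((∑ v, sval v : ℕ) : ℝ) := by rw [hSn]; push_cast; rfl
    have hne : (n : ℝ) ≠ 0 := Nat.cast_ne_zero.mpr (by omega)
    have hrne : (r : ℝ) ≠ 0 := ne_of_gt hrR
    rw [hc] at h0
    have h1 : Sn / n = (r : ℝ) * t := by linarith
    rw [div_eq_iff hne] at h1
    have ht' : t = Sn / (n * r) := by
      rw [h1]
      field_simp
    rw [ht', hSn']
    push_cast
    ring
  refine ⟨ε₀, c, κ, hε₀pos, hcne, ?_⟩
  intro ε hε
  obtain ⟨hεle, hεge⟩ : ε ≤ ε₀ ∧ -ε₀ ≤ ε := ⟨le_of_abs_le hε, neg_le_of_abs_le hε⟩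
  have hεr : ε * r ≤ 1 / 2 := by
    have h1 : ε₀ ≤ 1 / (2 * r) := min_le_right _ _
    have h2 : ε * r ≤ ε₀ * r := by nlinarith
    have h3 : ε₀ * r ≤ 1 / 2 := by
      have h4 : (1 / (2 * (r : ℝ))) * r = 1 / 2 := by field_simp
      nlinarith [h1, hrR]
    linarith
  have hεr' : 1 - ε * r ≥ 1 / 2 := by linarith
  have hεμ : -ε ≤ μ₀ / 2 := by
    have := min_le_left (μ₀ / 2) (1 / (2 * r))
    linarith
  set g : ℝ → ℝ := fun x => (1 - ε * (r : ℝ)) * id x + ε * f x with hg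
  set ρε := phi hH g with hρε
  have ha : phi hH (fun x => (1 - ε * (r : ℝ)) * id x) = ((1 - ε * (r : ℝ) : ℝ) : ℂ) • ρ := by
    rw [phi_smul hH, phi_id hH]
  have hb : phi hH (fun x => ε * f x) = ((ε : ℝ) : ℂ) • E := by
    rw [phi_smul hH, hE]
  have hρε_eq : ρε = ((1 - ε * (r : ℝ) : ℝ) : ℂ) • ρ + ((ε : ℝ) : ℂ) • E := by
    rw [hρε, hg, ← ha, ← hb, phi_add]
  have hρεpsd : ρε.PosSemidef := by
    refine phi_psd hH g fun i => ?_
    by_cases h : lam i = μ₀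
    · have : g (lam i) = (1 - ε * r) * lam i + ε := by simp [hg, hf, h]
      rw [this, h]
      nlinarith [hi₀]
    · have : g (lam i) = (1 - ε * r) * lam i := by simp [hg, hf, h]
      rw [this]
      nlinarith [hlam0 i]
  have hρεtr : ρε.trace = 1 := by
    rw [hρε_eq, Matrix.trace_add, Matrix.trace_smul, Matrix.trace_smul, htr, hEtr]
    simp only [smul_eq_mul]
    push_cast
    ring
  have hρεcomm : ∀ v, ρε * P v = P v * ρε := fun v => phi_comm hH g (hcomm v)
  set tv : Fin n → ℝ := fun v => t + ε * (((sval v : ℕ) : ℝ) - (r : ℝ) * t) with htv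
  have hρεval : ∀ v, (ρε * P v).trace = ((tv v : ℝ) : ℂ) := by
    intro v
    rw [hρε_eq, Matrix.add_mul, Matrix.smul_mul, Matrix.smul_mul, Matrix.trace_add,
      Matrix.trace_smul, Matrix.trace_smul, hval v, hsval v]
    simp only [smul_eq_mul, htv]
    push_cast
    ring
  have hρεobj : ((fq G t + ε * κ : ℝ) : ℂ)
      = ∑ vw ∈ edgeFinset' G, (ρε * P vw.1 * P vw.2).trace := by
    have hterm : ∀ vw ∈ edgeFinset' G, (ρε * P vw.1 * P vw.2).trace
        = ((1 - ε * (r : ℝ) : ℝ) : ℂ) * (ρ * P vw.1 * P vw.2).trace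
          + ((ε : ℝ) : ℂ) * (E * P vw.1 * P vw.2).trace := by
      intro vw _
      rw [hρε_eq, Matrix.add_mul, Matrix.add_mul, Matrix.smul_mul, Matrix.smul_mul,
        Matrix.smul_mul, Matrix.smul_mul, Matrix.trace_add, Matrix.trace_smul, Matrix.trace_smul]
      simp only [smul_eq_mul]
    rw [Finset.sum_congr rfl hterm, Finset.sum_add_distrib, ← Finset.mul_sum, ← Finset.mul_sum,
      ← hs, ← hWdef, hW, hκ]
    push_cast
    ring
  have hmem := fq_symmetrize G hn hvt hd P ρε hP hρεpsd hρεtr hρεcomm tv hρεval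
    (fq G t + ε * κ) hρεobj
  have hteq : (∑ v, tv v) / (n : ℝ) = t + ε * c := by
    have hsumtv : (∑ v, tv v) = n * t + ε * (Sn - n * ((r : ℝ) * t)) := by
      rw [htv]
      rw [Finset.sum_add_distrib, Finset.sum_const, Finset.card_univ, Fintype.card_fin,
        ← Finset.mul_sum, Finset.sum_sub_distrib, Finset.sum_const, Finset.card_univ,
        Fintype.card_fin, hSn]
      push_cast
      ring
    rw [hsumtv, hc]
    have hne : (n : ℝ) ≠ 0 := Nat.cast_ne_zero.mpr (by omega)
    field_simp
  rwa [hteq] at hmem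

end Perturb

set_option maxHeartbeats 1000000 in
theorem stmt4 {n : ℕ} (hn : 1 ≤ n) (G : SimpleGraph (Fin n)) [DecidableRel G.Adj]
    (hvt : VertexTransitive G) (het : EdgeTransitive G)
    (t : ℝ) (ht : t ∈ Set.Icc (0 : ℝ) 1) (hirr : Irrational t)
    (hattained : fq G t ∈ fqSet G t) :
    ∃ r s : ℚ, (r : ℝ) ≤ t ∧ t ≤ (s : ℝ) ∧
      ∃ a b : ℝ, ∀ u ∈ Set.Icc (r : ℝ) (s : ℝ), fq G u = a * u + b := by
  obtain ⟨ε₀, c, κ, hε₀, hc, hfam⟩ := exists_linear_family G hn hvt t hirr hattained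
  have hηpos : 0 < ε₀ * |c| := mul_pos hε₀ (abs_pos.mpr hc)
  set a : ℝ := κ / c with ha
  set b : ℝ := fq G t - a * t with hb
  have hub : ∀ u : ℝ, |u - t| ≤ ε₀ * |c| → (fq G u ≤ a * u + b ∧ (fqSet G u).Nonempty) := by
    intro u hu
    set ε : ℝ := (u - t) / c with hε
    have hεabs : |ε| ≤ ε₀ := by
      rw [hε, abs_div, div_le_iff₀ (abs_pos.mpr hc)]
      exact hu
    have hmem := hfam ε hεabs
    have hteps : t + ε * c = u := by
      rw [hε, div_mul_cancel₀ (u - t) hc]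
      ring
    rw [hteps] at hmem
    refine ⟨?_, ⟨_, hmem⟩⟩
    have hle := csInf_le (fqSet_bddBelow G u) hmem
    have heq : fq G t + ε * κ = a * u + b := by
      rw [hε, ha, hb, ha]
      field_simp
      ring
    rwa [heq] at hle
  have hta : fq G t = a * t + b := by rw [hb]; ring
  obtain ⟨q1, hq1a, hq1b⟩ := exists_rat_btwn (show t - ε₀ * |c| < t by linarith)
  obtain ⟨q2, hq2a, hq2b⟩ := exists_rat_btwn (show t < t + ε₀ * |c| by linarith)
  refine ⟨q1, q2, le_of_lt hq1b, le_of_lt hq2a, a, b, ?_⟩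
  intro u hu
  obtain ⟨hu1, hu2⟩ := hu
  have huin : |u - t| ≤ ε₀ * |c| := by
    rw [abs_le]
    constructor <;> nlinarith [hq1a, hq2b]
  have hq2in : |(q2 : ℝ) - t| ≤ ε₀ * |c| := by
    rw [abs_le]
    constructor <;> nlinarith [hq2a, hq2b]
  have hq1in : |(q1 : ℝ) - t| ≤ ε₀ * |c| := by
    rw [abs_le]
    constructor <;> nlinarith [hq1a, hq1b]
  obtain ⟨hubu, hneu⟩ := hub u huin
  refine le_antisymm hubu ?_
  rcases lt_trichotomy u t with hlt | heq | hgt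
  · obtain ⟨hubq, hneq⟩ := hub (q2 : ℝ) hq2in
    have hd0 : (0 : ℝ) < (q2 : ℝ) - u := by linarith
    set μ : ℝ := ((q2 : ℝ) - t) / ((q2 : ℝ) - u) with hμ
    have hμ0 : 0 < μ := div_pos (by linarith) hd0
    have hμ1 : μ ≤ 1 := by rw [hμ, div_le_one hd0]; linarith
    have hcomb : μ * u + (1 - μ) * (q2 : ℝ) = t := by
      rw [hμ]
      field_simp
      ring
    have hconv := fq_convex G hneu hneq (le_of_lt hμ0) hμ1
    rw [hcomb] at hconv
    have hmono : (1 - μ) * fq G (q2 : ℝ) ≤ (1 - μ) * (a * (q2 : ℝ) + b) :=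
      mul_le_mul_of_nonneg_left hubq (by linarith)
    have hid : a * t + b = μ * (a * u + b) + (1 - μ) * (a * (q2 : ℝ) + b) := by
      rw [← hcomb]
      ring
    have h5 : μ * (a * u + b) ≤ μ * fq G u := by nlinarith [hconv, hmono, hid, hta]
    exact le_of_mul_le_mul_left h5 hμ0
  · rw [heq, ← hta]
  · obtain ⟨hubq, hneq⟩ := hub (q1 : ℝ) hq1in
    have hd0 : (0 : ℝ) < u - (q1 : ℝ) := by linarith
    set μ : ℝ := (t - (q1 : ℝ)) / (u - (q1 : ℝ)) with hμ
    have hμ0 : 0 < μ := div_pos (by linarith) hd0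
    have hμ1 : μ ≤ 1 := by rw [hμ, div_le_one hd0]; linarith
    have hcomb : μ * u + (1 - μ) * (q1 : ℝ) = t := by
      rw [hμ]
      field_simp
      ring
    have hconv := fq_convex G hneu hneq (le_of_lt hμ0) hμ1
    rw [hcomb] at hconv
    have hmono : (1 - μ) * fq G (q1 : ℝ) ≤ (1 - μ) * (a * (q1 : ℝ) + b) :=
      mul_le_mul_of_nonneg_left hubq (by linarith)
    have hid : a * t + b = μ * (a * u + b) + (1 - μ) * (a * (q1 : ℝ) + b) := by
      rw [← hcomb]
      ring
    have h5 : μ * (a * u + b) ≤ μ * fq G u := by nlinarith [hconv, hmono, hid, hta]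
    exact le_of_mul_le_mul_left h5 hμ0
end

section
/- Let G be a finite simple graph on vertices {1,…,n} with ordered edge set E, |E| > 0, which is vertex transitive and edge transitive, and let t ∈ [0,1]. Let S be the set of real numbers s such that max{0, |E|(2t−1)} ≤ s ≤ |E|·t and there exists a positive semidefinite real (n+1)×(n+1) matrix P = [p_{ij}]_{0≤i,j≤n} with p_{00} = 1; p_{0j} = p_{j0} = t and p_{jj} = t for all 1 ≤ j ≤ n; max{0, 2t−1} ≤ p_{ij} ≤ t for all 1 ≤ i,j ≤ n with i ≠ j; and p_{ij} = s/|E| for all (i,j) ∈ E. Then S is nonempty and f_vect(t) = min S. -/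
open scoped BigOperators

/-- A correlation with `n` inputs and `2` outputs: `p i j v w` is `p(i,j|v,w)`. -/
abbrev Corr (n : ℕ) := Fin 2 → Fin 2 → Fin n → Fin n → ℝ

/-- Synchronous correlation (for two outputs). -/
def IsSync {n : ℕ} (p : Corr n) : Prop :=
  ∀ v, p 0 1 v v = 0 ∧ p 1 0 v v = 0

/-- Both marginals of outcome `0` are constantly equal to `t`. -/
def HasMarginals {n : ℕ} (p : Corr n) (t : ℝ) : Prop :=
  (∀ v w, ∑ j, p 0 j v w = t) ∧ (∀ v w, ∑ i, p i 0 v w = t)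

/-- `F(p) = Σ_{(v,w) ∈ E} p(0,0|v,w)`. -/
def Fval {n : ℕ} (G : SimpleGraph (Fin n)) [DecidableRel G.Adj] (p : Corr n) : ℝ :=
  ∑ vw ∈ edgeFinset' G, p 0 0 vw.1 vw.2

/-- A realization of `p` as a vectorial correlation, in a real Hilbert space. -/
structure VectRealization (n : ℕ) (p : Corr n) where
  H : Type
  [nacg : NormedAddCommGroup H]
  [ips : InnerProductSpace ℝ H]
  x : Fin n → Fin 2 → H
  y : Fin n → Fin 2 → H
  h : H
  hnorm : ‖h‖ = 1
  hxorth : ∀ v, inner ℝ (x v 0) (x v 1) = (0 : ℝ)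
  hyorth : ∀ w, inner ℝ (y w 0) (y w 1) = (0 : ℝ)
  hxsum : ∀ v, x v 0 + x v 1 = h
  hysum : ∀ w, y w 0 + y w 1 = h
  hval : ∀ i j v w, p i j v w = inner ℝ (x v i) (y w j)
  hnn : ∀ i j v w, 0 ≤ p i j v w

/-- `p` is a vectorial correlation. -/
def IsVect {n : ℕ} (p : Corr n) : Prop := Nonempty (VectRealization n p)

/-- `f_vect(t)` for the graph `G`: the infimum of `F(p)` over synchronous vectorial
correlations `p` whose marginals of outcome `0` are constantly equal to `t`. -/
noncomputable def fvect {n : ℕ} (G : SimpleGraph (Fin n)) [DecidableRel G.Adj] (t : ℝ) : ℝ :=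
  sInf {s | ∃ p : Corr n, IsVect p ∧ IsSync p ∧ HasMarginals p t ∧ s = Fval G p}

open Matrix in

open Matrix in
lemma gram_posSemidef {m : Type*} [Fintype m] {H : Type*} [NormedAddCommGroup H]
    [InnerProductSpace ℝ H] (f : m → H) :
    Matrix.PosSemidef (Matrix.of fun i j => (inner ℝ (f i) (f j) : ℝ)) := by
  apply Matrix.PosSemidef.of_dotProduct_mulVec_nonneg
  · ext i j
    simp [Matrix.conjTranspose_apply, real_inner_comm]
  · intro x
    have : dotProduct (star x) ((Matrix.of fun i j => (inner ℝ (f i) (f j) : ℝ)) *ᵥ x)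
        = inner ℝ (∑ i, x i • f i) (∑ j, x j • f j) := by
      simp only [dotProduct, Matrix.mulVec, Matrix.of_apply, star_trivial, inner_sum,
        sum_inner, real_inner_smul_left, real_inner_smul_right, Finset.mul_sum]
      apply Finset.sum_congr rfl
      intro i _
      apply Finset.sum_congr rfl
      intro j _
      rw [real_inner_comm (f j) (f i)]; ring
    rw [this]
    exact real_inner_self_nonneg

open Matrix in
lemma posSemidef_smul {m : Type*} [Fintype m] {M : Matrix m m ℝ} (hM : M.PosSemidef)
    {c : ℝ} (hc : 0 ≤ c) : (c • M).PosSemidef := by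
  apply Matrix.PosSemidef.of_dotProduct_mulVec_nonneg
  · unfold Matrix.IsHermitian
    rw [Matrix.conjTranspose_smul, hM.1]
    simp
  · intro x
    rw [Matrix.smul_mulVec, dotProduct_smul]
    exact mul_nonneg hc (hM.dotProduct_mulVec_nonneg x)

lemma posSemidef_sum {m ι : Type*} [Fintype m] (s : Finset ι) (f : ι → Matrix m m ℝ)
    (h : ∀ i ∈ s, (f i).PosSemidef) : (∑ i ∈ s, f i).PosSemidef := by
  classical
  induction s using Finset.induction_on with
  | empty => simpa using Matrix.PosSemidef.zero
  | @insert a s' hni ih =>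
    rw [Finset.sum_insert hni]
    exact (h a (Finset.mem_insert_self a s')).add
      (ih fun i hi => h i (Finset.mem_insert_of_mem hi))

lemma mem_edgeFinset' {n : ℕ} (G : SimpleGraph (Fin n)) [DecidableRel G.Adj]
    {vw : Fin n × Fin n} : vw ∈ edgeFinset' G ↔ G.Adj vw.1 vw.2 := by
  simp [edgeFinset']

instance autDecidable {n : ℕ} (G : SimpleGraph (Fin n)) [DecidableRel G.Adj] :
    DecidablePred (IsGraphAut G) := fun π =>
  decidable_of_iff (∀ v w, G.Adj v w ↔ G.Adj (π v) (π w)) Iff.rfl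

def autFinset {n : ℕ} (G : SimpleGraph (Fin n)) [DecidableRel G.Adj] :
    Finset (Equiv.Perm (Fin n)) :=
  Finset.univ.filter fun π => IsGraphAut G π

lemma mem_autFinset {n : ℕ} (G : SimpleGraph (Fin n)) [DecidableRel G.Adj]
    {π : Equiv.Perm (Fin n)} : π ∈ autFinset G ↔ IsGraphAut G π := by
  simp [autFinset]

lemma aut_one {n : ℕ} (G : SimpleGraph (Fin n)) : IsGraphAut G 1 := fun v w => by simp

lemma aut_mul {n : ℕ} (G : SimpleGraph (Fin n)) {π σ : Equiv.Perm (Fin n)}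
    (hπ : IsGraphAut G π) (hσ : IsGraphAut G σ) :
    IsGraphAut G (π * σ) := fun v w => (hσ v w).trans (hπ (σ v) (σ w))

lemma aut_inv {n : ℕ} (G : SimpleGraph (Fin n)) {σ : Equiv.Perm (Fin n)}
    (hσ : IsGraphAut G σ) : IsGraphAut G σ⁻¹ := by
  intro v w
  have := hσ (σ⁻¹ v) (σ⁻¹ w)
  simp only [← Equiv.Perm.mul_apply, mul_inv_cancel, Equiv.Perm.one_apply] at this
  exact this.symm

lemma autFinset_nonempty {n : ℕ} (G : SimpleGraph (Fin n)) [DecidableRel G.Adj] :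
    (autFinset G).Nonempty :=
  ⟨1, (mem_autFinset G).mpr (aut_one G)⟩

lemma aut_sum_reindex {n : ℕ} (G : SimpleGraph (Fin n)) [DecidableRel G.Adj]
    {σ : Equiv.Perm (Fin n)} (hσ : IsGraphAut G σ)
    (g : Equiv.Perm (Fin n) → ℝ) :
    ∑ π ∈ autFinset G, g (π * σ) = ∑ π ∈ autFinset G, g π := by
  apply Finset.sum_nbij' (fun π => π * σ) (fun π => π * σ⁻¹)
  · intro a ha
    exact (mem_autFinset G).mpr (aut_mul G ((mem_autFinset G).mp ha) hσ)
  · intro a ha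
    exact (mem_autFinset G).mpr (aut_mul G ((mem_autFinset G).mp ha) (aut_inv G hσ))
  · intro a _; group
  · intro a _; group
  · intro a _; rfl

lemma edge_sum_reindex {n : ℕ} (G : SimpleGraph (Fin n)) [DecidableRel G.Adj]
    {π : Equiv.Perm (Fin n)} (hπ : IsGraphAut G π)
    (g : Fin n → Fin n → ℝ) :
    ∑ vw ∈ edgeFinset' G, g (π vw.1) (π vw.2) = ∑ vw ∈ edgeFinset' G, g vw.1 vw.2 := by
  apply Finset.sum_nbij' (fun vw : Fin n × Fin n => (π vw.1, π vw.2))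
    (fun vw : Fin n × Fin n => (π⁻¹ vw.1, π⁻¹ vw.2))
  · intro a ha
    exact (mem_edgeFinset' G).mpr ((hπ a.1 a.2).mp ((mem_edgeFinset' G).mp ha))
  · intro a ha
    exact (mem_edgeFinset' G).mpr ((aut_inv G hπ a.1 a.2).mp ((mem_edgeFinset' G).mp ha))
  · intro a _; simp
  · intro a _; simp
  · intro a _; rfl

lemma avg_const {α : Type*} {A : Finset α} (hA : A.Nonempty) {g : α → ℝ}
    {c : ℝ} (h : ∀ a ∈ A, g a = c) : ((A.card : ℝ))⁻¹ * ∑ a ∈ A, g a = c := by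
  rw [Finset.sum_congr rfl h, Finset.sum_const, nsmul_eq_mul]
  have hc : (0:ℝ) < A.card := by
    exact_mod_cast Finset.card_pos.mpr hA
  field_simp

lemma avg_mem_Icc {α : Type*} {A : Finset α} (hA : A.Nonempty)
    {g : α → ℝ} {lo hi : ℝ} (h : ∀ a ∈ A, lo ≤ g a ∧ g a ≤ hi) :
    lo ≤ ((A.card : ℝ))⁻¹ * ∑ a ∈ A, g a ∧ ((A.card : ℝ))⁻¹ * ∑ a ∈ A, g a ≤ hi := by
  have hc : (0:ℝ) < A.card := by exact_mod_cast Finset.card_pos.mpr hA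
  constructor
  · rw [le_inv_mul_iff₀ hc]
    calc (A.card : ℝ) * lo = ∑ _a ∈ A, lo := by rw [Finset.sum_const, nsmul_eq_mul]
      _ ≤ ∑ a ∈ A, g a := Finset.sum_le_sum fun a ha => (h a ha).1
  · rw [inv_mul_le_iff₀ hc]
    calc ∑ a ∈ A, g a ≤ ∑ _a ∈ A, hi := Finset.sum_le_sum fun a ha => (h a ha).2
      _ = (A.card : ℝ) * hi := by rw [Finset.sum_const, nsmul_eq_mul]


open Matrix in
lemma gram_of_realization {n : ℕ} (hn : 1 ≤ n) {t : ℝ} {p : Corr n} (R : VectRealization n p)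
    (hs : IsSync p) (hm : HasMarginals p t) :
    (∀ v w, p 0 0 v w + p 0 1 v w + p 1 0 v w + p 1 1 v w = 1) ∧
    ∃ Q : Matrix (Fin (n+1)) (Fin (n+1)) ℝ, Q.PosSemidef ∧ Q 0 0 = 1 ∧
      (∀ v : Fin n, Q 0 v.succ = t) ∧ (∀ v : Fin n, Q v.succ 0 = t) ∧
      (∀ v w : Fin n, Q v.succ w.succ = p 0 0 v w) := by
  letI := R.nacg
  letI := R.ips
  obtain ⟨hm1, hm2⟩ := hm
  have w0 : Fin n := ⟨0, hn⟩
  -- row marginal as two-term sum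
  have hm1' : ∀ v w, p 0 0 v w + p 0 1 v w = t := by
    intro v w; have := hm1 v w; rwa [Fin.sum_univ_two] at this
  have hm2' : ∀ v w, p 0 0 v w + p 1 0 v w = t := by
    intro v w; have := hm2 v w; rwa [Fin.sum_univ_two] at this
  have hh : (inner ℝ R.h R.h : ℝ) = 1 := by
    rw [real_inner_self_eq_norm_mul_norm, R.hnorm]; norm_num
  have total : ∀ v w, p 0 0 v w + p 0 1 v w + p 1 0 v w + p 1 1 v w = 1 := by
    intro v w
    have : (inner ℝ (R.x v 0 + R.x v 1) (R.y w 0 + R.y w 1) : ℝ) = 1 := by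
      rw [R.hxsum, R.hysum]; exact hh
    rw [inner_add_left, inner_add_right, inner_add_right] at this
    rw [R.hval 0 0 v w, R.hval 0 1 v w, R.hval 1 0 v w, R.hval 1 1 v w]
    linarith
  refine ⟨total, ?_⟩
  -- inner of x v 0 with h is t
  have xh : ∀ v, (inner ℝ (R.x v 0) R.h : ℝ) = t := by
    intro v
    have : R.h = R.y w0 0 + R.y w0 1 := (R.hysum w0).symm
    rw [this, inner_add_right, ← R.hval 0 0 v w0, ← R.hval 0 1 v w0]
    exact hm1' v w0
  have hy : ∀ w, (inner ℝ R.h (R.y w 0) : ℝ) = t := by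
    intro w
    have : R.h = R.x w0 0 + R.x w0 1 := (R.hxsum w0).symm
    rw [this, inner_add_left, ← R.hval 0 0 w0 w, ← R.hval 1 0 w0 w]
    exact hm2' w0 w
  have xx : ∀ v, (inner ℝ (R.x v 0) (R.x v 0) : ℝ) = t := by
    intro v
    have h1 : R.x v 0 = R.h - R.x v 1 := by rw [← R.hxsum v]; abel
    calc (inner ℝ (R.x v 0) (R.x v 0) : ℝ) = inner ℝ (R.x v 0) (R.h - R.x v 1) := by rw [← h1]
      _ = inner ℝ (R.x v 0) R.h - inner ℝ (R.x v 0) (R.x v 1) := inner_sub_right _ _ _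
      _ = t := by rw [xh v, R.hxorth v]; ring
  have yy : ∀ w, (inner ℝ (R.y w 0) (R.y w 0) : ℝ) = t := by
    intro w
    have h1 : R.y w 0 = R.h - R.y w 1 := by rw [← R.hysum w]; abel
    calc (inner ℝ (R.y w 0) (R.y w 0) : ℝ) = inner ℝ (R.h - R.y w 1) (R.y w 0) := by rw [← h1]
      _ = inner ℝ R.h (R.y w 0) - inner ℝ (R.y w 1) (R.y w 0) := inner_sub_left _ _ _
      _ = t := by rw [hy w, real_inner_comm, R.hyorth w]; ring
  have pdiag : ∀ v, p 0 0 v v = t := by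
    intro v
    have := hm1' v v
    rw [(hs v).1] at this
    linarith
  have xy : ∀ v, (inner ℝ (R.x v 0) (R.y v 0) : ℝ) = t := by
    intro v; rw [← R.hval 0 0 v v]; exact pdiag v
  have xeqy : ∀ v, R.x v 0 = R.y v 0 := by
    intro v
    have hz : (inner ℝ (R.x v 0 - R.y v 0) (R.x v 0 - R.y v 0) : ℝ) = 0 := by
      rw [inner_sub_left, inner_sub_right, inner_sub_right]
      rw [xx v, yy v, xy v]
      have h2 : (inner ℝ (R.y v 0) (R.x v 0) : ℝ) = t := by
        rw [real_inner_comm]; exact xy v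
      rw [h2]; ring
    have := inner_self_eq_zero.mp hz
    exact sub_eq_zero.mp this
  set f : Fin (n+1) → R.H := Fin.cases R.h (fun v => R.x v 0) with hf
  refine ⟨Matrix.of fun i j => (inner ℝ (f i) (f j) : ℝ), gram_posSemidef f, ?_, ?_, ?_, ?_⟩
  · simp [hf, hh, R.hnorm]
  · intro v
    simp only [Matrix.of_apply, hf, Fin.cases_zero, Fin.cases_succ]
    rw [real_inner_comm]; exact xh v
  · intro v
    simp only [Matrix.of_apply, hf, Fin.cases_zero, Fin.cases_succ]
    exact xh v
  · intro v w
    simp only [Matrix.of_apply, hf, Fin.cases_succ]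
    rw [xeqy w, ← R.hval 0 0 v w]

/-- The matrix set from the statement. -/
def SMatSet {n : ℕ} (G : SimpleGraph (Fin n)) [DecidableRel G.Adj] (t : ℝ) : Set ℝ :=
  {s : ℝ |
    max 0 (((edgeFinset' G).card : ℝ) * (2 * t - 1)) ≤ s ∧
    s ≤ ((edgeFinset' G).card : ℝ) * t ∧
    ∃ P : Matrix (Fin (n + 1)) (Fin (n + 1)) ℝ,
      P.PosSemidef ∧
      P 0 0 = 1 ∧
      (∀ j : Fin n, P 0 j.succ = t ∧ P j.succ 0 = t ∧ P j.succ j.succ = t) ∧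
      (∀ i j : Fin n, i ≠ j →
        max 0 (2 * t - 1) ≤ P i.succ j.succ ∧ P i.succ j.succ ≤ t) ∧
      (∀ i j : Fin n, G.Adj i j →
        P i.succ j.succ = s / ((edgeFinset' G).card : ℝ))}


open Matrix in
lemma feasible_mem_S {n : ℕ} (hn : 1 ≤ n) (G : SimpleGraph (Fin n)) [DecidableRel G.Adj]
    (hE : 0 < (edgeFinset' G).card) (het : EdgeTransitive G) {t : ℝ}
    (ht : t ∈ Set.Icc (0:ℝ) 1)
    {p : Corr n} (R : VectRealization n p) (hs : IsSync p) (hm : HasMarginals p t) :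
    Fval G p ∈ SMatSet G t := by
  obtain ⟨ht0, ht1⟩ := ht
  obtain ⟨total, Q, hQ, hQ00, hQ0s, hQs0, hQss⟩ := gram_of_realization hn R hs hm
  have hm1' : ∀ v w, p 0 0 v w + p 0 1 v w = t := by
    intro v w; have := hm.1 v w; rwa [Fin.sum_univ_two] at this
  have hm2' : ∀ v w, p 0 0 v w + p 1 0 v w = t := by
    intro v w; have := hm.2 v w; rwa [Fin.sum_univ_two] at this
  -- universal bounds on p 0 0
  have pbounds : ∀ v w, max 0 (2 * t - 1) ≤ p 0 0 v w ∧ p 0 0 v w ≤ t := by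
    intro v w
    have h1 := R.hnn 0 0 v w
    have h2 := R.hnn 0 1 v w
    have h3 := R.hnn 1 1 v w
    have h4 := total v w
    have h5 := hm1' v w
    have h6 := hm2' v w
    constructor
    · exact max_le h1 (by linarith)
    · linarith
  -- setup
  set A := autFinset G with hA
  have hAne : A.Nonempty := autFinset_nonempty G
  have hN : (0:ℝ) < A.card := by exact_mod_cast Finset.card_pos.mpr hAne
  set ext : Equiv.Perm (Fin n) → Fin (n+1) → Fin (n+1) :=
    fun π => Fin.cases 0 (fun v => (π v).succ) with hext
  set P : Matrix (Fin (n+1)) (Fin (n+1)) ℝ :=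
    Matrix.of fun i j => ((A.card : ℝ))⁻¹ * ∑ π ∈ A, Q (ext π i) (ext π j) with hP
  have hPentry : ∀ i j, P i j = ((A.card : ℝ))⁻¹ * ∑ π ∈ A, Q (ext π i) (ext π j) := by
    intro i j; rfl
  have hPsd : P.PosSemidef := by
    have : P = ((A.card : ℝ))⁻¹ • ∑ π ∈ A, Q.submatrix (ext π) (ext π) := by
      ext i j
      simp only [hPentry, Matrix.smul_apply, Matrix.sum_apply, Matrix.submatrix_apply,
        smul_eq_mul]
    rw [this]
    exact posSemidef_smul (posSemidef_sum _ _ fun π _ => hQ.submatrix (ext π))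
      (by positivity)
  have hext0 : ∀ π, ext π 0 = 0 := fun π => rfl
  have hexts : ∀ π v, ext π v.succ = (π v).succ := fun π v => rfl
  have hP00 : P 0 0 = 1 := by
    rw [hPentry]
    exact avg_const hAne fun π _ => by rw [hext0, hQ00]
  have hP0s : ∀ v : Fin n, P 0 v.succ = t := by
    intro v; rw [hPentry]
    exact avg_const hAne fun π _ => by rw [hext0, hexts, hQ0s]
  have hPs0 : ∀ v : Fin n, P v.succ 0 = t := by
    intro v; rw [hPentry]
    exact avg_const hAne fun π _ => by rw [hext0, hexts, hQs0]
  have pdiag : ∀ v, p 0 0 v v = t := by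
    intro v; have := hm1' v v; rw [(hs v).1] at this; linarith
  have hPss : ∀ v : Fin n, P v.succ v.succ = t := by
    intro v; rw [hPentry]
    exact avg_const hAne fun π _ => by rw [hexts, hQss, pdiag]
  have hPbd : ∀ i j : Fin n, max 0 (2 * t - 1) ≤ P i.succ j.succ ∧ P i.succ j.succ ≤ t := by
    intro i j; rw [hPentry]
    exact avg_mem_Icc hAne fun π _ => by rw [hexts, hexts, hQss]; exact pbounds _ _
  -- invariance under automorphisms
  have hinv : ∀ σ : Equiv.Perm (Fin n), IsGraphAut G σ → ∀ v w : Fin n,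
      P (σ v).succ (σ w).succ = P v.succ w.succ := by
    intro σ hσ v w
    rw [hPentry, hPentry]
    congr 1
    have := aut_sum_reindex G hσ (fun π => Q (ext π v.succ) (ext π w.succ))
    rw [← this]
    apply Finset.sum_congr rfl
    intro π _
    simp only [hexts, Equiv.Perm.mul_apply]
  -- sum over edges of P equals Fval
  have hsum : ∑ vw ∈ edgeFinset' G, P vw.1.succ vw.2.succ = Fval G p := by
    have step : ∀ π ∈ A, ∑ vw ∈ edgeFinset' G, Q (ext π vw.1.succ) (ext π vw.2.succ)
        = Fval G p := by
      intro π hπ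
      have hπ' : IsGraphAut G π := (mem_autFinset G).mp hπ
      have := edge_sum_reindex G hπ' (fun a b => Q a.succ b.succ)
      simp only [hexts]
      rw [this]
      unfold Fval
      exact Finset.sum_congr rfl fun vw _ => hQss _ _
    calc ∑ vw ∈ edgeFinset' G, P vw.1.succ vw.2.succ
        = ((A.card : ℝ))⁻¹ * ∑ vw ∈ edgeFinset' G, ∑ π ∈ A,
            Q (ext π vw.1.succ) (ext π vw.2.succ) := by
          rw [Finset.mul_sum]
          exact Finset.sum_congr rfl fun vw _ => hPentry _ _
      _ = ((A.card : ℝ))⁻¹ * ∑ π ∈ A, ∑ vw ∈ edgeFinset' G,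
            Q (ext π vw.1.succ) (ext π vw.2.succ) := by rw [Finset.sum_comm]
      _ = Fval G p := avg_const hAne step
  -- all edge entries are equal
  obtain ⟨ab, hab⟩ := Finset.card_pos.mp hE
  have habAdj : G.Adj ab.1 ab.2 := (mem_edgeFinset' G).mp hab
  have hconst : ∀ i j : Fin n, G.Adj i j → P i.succ j.succ = P ab.1.succ ab.2.succ := by
    intro i j hij
    obtain ⟨σ, hσ, h1, h2⟩ := het ab.1 ab.2 i j habAdj hij
    rw [← h1, ← h2]
    exact hinv σ hσ ab.1 ab.2
  have hcard : ((edgeFinset' G).card : ℝ) ≠ 0 := by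
    have : (0:ℝ) < (edgeFinset' G).card := by exact_mod_cast hE
    linarith
  have hPedge : ∀ i j : Fin n, G.Adj i j →
      P i.succ j.succ = Fval G p / ((edgeFinset' G).card : ℝ) := by
    intro i j hij
    rw [hconst i j hij]
    have hsum2 : ∑ vw ∈ edgeFinset' G, P vw.1.succ vw.2.succ
        = ((edgeFinset' G).card : ℝ) * P ab.1.succ ab.2.succ := by
      rw [Finset.sum_congr rfl fun vw hvw => hconst vw.1 vw.2 ((mem_edgeFinset' G).mp hvw),
        Finset.sum_const, nsmul_eq_mul]
    rw [hsum2] at hsum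
    field_simp
    linarith [hsum]
  have hFub : Fval G p ≤ ((edgeFinset' G).card : ℝ) * t := by
    unfold Fval
    calc ∑ vw ∈ edgeFinset' G, p 0 0 vw.1 vw.2 ≤ ∑ _vw ∈ edgeFinset' G, t :=
          Finset.sum_le_sum fun vw _ => (pbounds _ _).2
      _ = ((edgeFinset' G).card : ℝ) * t := by rw [Finset.sum_const, nsmul_eq_mul]
  have hFlb : max 0 (((edgeFinset' G).card : ℝ) * (2 * t - 1)) ≤ Fval G p := by
    apply max_le
    · exact Finset.sum_nonneg fun vw _ => R.hnn 0 0 vw.1 vw.2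
    · calc ((edgeFinset' G).card : ℝ) * (2 * t - 1) = ∑ _vw ∈ edgeFinset' G, (2*t-1) := by
            rw [Finset.sum_const, nsmul_eq_mul]
        _ ≤ ∑ vw ∈ edgeFinset' G, p 0 0 vw.1 vw.2 :=
            Finset.sum_le_sum fun vw _ =>
              le_trans (le_max_right 0 (2*t-1)) (pbounds vw.1 vw.2).1
        _ = Fval G p := rfl
  exact ⟨hFlb, hFub, P, hPsd, hP00, fun j => ⟨hP0s j, hPs0 j, hPss j⟩,
    fun i j _ => hPbd i j, hPedge⟩

open Matrix in
lemma S_subset_feasible {n : ℕ} (G : SimpleGraph (Fin n)) [DecidableRel G.Adj]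
    (hE : 0 < (edgeFinset' G).card) {t : ℝ} (ht : t ∈ Set.Icc (0:ℝ) 1)
    {s : ℝ} (hs : s ∈ SMatSet G t) :
    ∃ p : Corr n, IsVect p ∧ IsSync p ∧ HasMarginals p t ∧ s = Fval G p := by
  obtain ⟨ht0, ht1⟩ := ht
  obtain ⟨hlb, hub, P, hPsd, hP00, hPr, hPbd, hPedge⟩ := hs
  obtain ⟨B, hB⟩ : ∃ B : Matrix (Fin (n+1)) (Fin (n+1)) ℝ, P = Bᴴ * B := by
    open scoped MatrixOrder in
    obtain ⟨X, hX, -, hXX⟩ := CFC.exists_sqrt_of_isSelfAdjoint_of_quasispectrumRestricts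
      hPsd.isHermitian (QuasispectrumRestricts.nnreal_of_nonneg hPsd.nonneg)
    exact ⟨X, by rw [← hXX, ← Matrix.star_eq_conjTranspose, hX.star_eq]⟩
  have hcard : (0:ℝ) < ((edgeFinset' G).card : ℝ) := by exact_mod_cast hE
  -- universal bounds
  have pub : ∀ v w : Fin n, P v.succ w.succ ≤ t := by
    intro v w
    by_cases h : v = w
    · subst h; exact le_of_eq (hPr v).2.2
    · exact (hPbd v w h).2
  have plb : ∀ v w : Fin n, max 0 (2*t-1) ≤ P v.succ w.succ := by
    intro v w
    by_cases h : v = w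
    · subst h; rw [(hPr v).2.2]; exact max_le ht0 (by linarith)
    · exact (hPbd v w h).1
  -- the Euclidean space realization
  set col : Fin (n+1) → EuclideanSpace ℝ (Fin (n+1)) :=
    fun i => WithLp.toLp 2 (fun k => B k i) with hcol
  have colinner : ∀ i j, (inner ℝ (col i) (col j) : ℝ) = P i j := by
    intro i j
    rw [hB]
    simp only [PiLp.inner_apply, RCLike.inner_apply, conj_trivial, hcol, PiLp.toLp_apply,
      Matrix.mul_apply, Matrix.conjTranspose_apply, star_trivial]
    exact Finset.sum_congr rfl fun _ _ => mul_comm _ _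
  set p : Corr n := fun i j v w =>
    ![![P v.succ w.succ, t - P v.succ w.succ],
      ![t - P v.succ w.succ, 1 - 2*t + P v.succ w.succ]] i j with hp
  have hnn : ∀ (i j : Fin 2) (v w : Fin n), 0 ≤ p i j v w := by
    intro i j v w
    have h1 := plb v w
    have h2 := pub v w
    have h3 : (0:ℝ) ≤ P v.succ w.succ := le_trans (le_max_left _ _) h1
    have h4 : 2*t - 1 ≤ P v.succ w.succ := le_trans (le_max_right _ _) h1
    fin_cases i <;> fin_cases j <;> simp [hp] <;> linarith
  refine ⟨p, ?_, ?_, ?_, ?_⟩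
  · -- IsVect
    refine ⟨⟨EuclideanSpace ℝ (Fin (n+1)),
      (fun v => ![col v.succ, col 0 - col v.succ]),
      (fun v => ![col v.succ, col 0 - col v.succ]),
      col 0, ?_, ?_, ?_, ?_, ?_, ?_, hnn⟩⟩
    · have : (inner ℝ (col 0) (col 0) : ℝ) = 1 := by rw [colinner, hP00]
      rw [real_inner_self_eq_norm_mul_norm] at this
      nlinarith [norm_nonneg (col 0)]
    · intro v
      simp only [Matrix.cons_val_zero, Matrix.cons_val_one, Matrix.head_cons]
      rw [inner_sub_right, colinner, colinner, (hPr v).2.1, (hPr v).2.2]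
      ring
    · intro v
      simp only [Matrix.cons_val_zero, Matrix.cons_val_one, Matrix.head_cons]
      rw [inner_sub_right, colinner, colinner, (hPr v).2.1, (hPr v).2.2]
      ring
    · intro v
      simp only [Matrix.cons_val_zero, Matrix.cons_val_one, Matrix.head_cons]
      abel
    · intro v
      simp only [Matrix.cons_val_zero, Matrix.cons_val_one, Matrix.head_cons]
      abel
    · intro i j v w
      fin_cases i <;> fin_cases j <;>
        simp only [hp, Fin.mk_zero, Fin.mk_one, Fin.isValue, Matrix.cons_val_zero,
          Matrix.cons_val_one, Matrix.head_cons, inner_sub_left, inner_sub_right,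
          colinner, hP00, (hPr v).2.1, (hPr w).1, (hPr v).1] <;> ring
  · intro v
    constructor <;>
    · simp only [hp, Fin.isValue, Matrix.cons_val_zero, Matrix.cons_val_one, Matrix.head_cons]
      rw [(hPr v).2.2]; ring
  · constructor <;> intro v w <;> rw [Fin.sum_univ_two] <;>
      simp only [hp, Fin.isValue, Matrix.cons_val_zero, Matrix.cons_val_one,
        Matrix.head_cons] <;> ring
  · unfold Fval
    have : ∀ vw ∈ edgeFinset' G, p 0 0 vw.1 vw.2 = s / ((edgeFinset' G).card : ℝ) := by
      intro vw hvw
      simp only [hp, Fin.isValue, Matrix.cons_val_zero]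
      exact hPedge vw.1 vw.2 ((mem_edgeFinset' G).mp hvw)
    rw [Finset.sum_congr rfl this, Finset.sum_const, nsmul_eq_mul]
    field_simp

open Matrix in
lemma SMatSet_nonempty {n : ℕ} (G : SimpleGraph (Fin n)) [DecidableRel G.Adj]
    (hE : 0 < (edgeFinset' G).card) {t : ℝ} (ht : t ∈ Set.Icc (0:ℝ) 1) :
    (SMatSet G t).Nonempty := by
  obtain ⟨ht0, ht1⟩ := ht
  have hcard : (0:ℝ) < ((edgeFinset' G).card : ℝ) := by exact_mod_cast hE
  have htt : 0 ≤ t - t^2 := by nlinarith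
  have h2t : 2*t - 1 ≤ t^2 := by nlinarith
  set B : Matrix (Fin (n+1)) (Fin (n+1)) ℝ :=
    Matrix.of fun k i => if i = 0 then (if k = 0 then 1 else 0)
      else if k = 0 then t else if k = i then Real.sqrt (t - t^2) else 0 with hBdef
  set P := Bᴴ * B with hPdef
  have hPsd : P.PosSemidef := Matrix.posSemidef_conjTranspose_mul_self B
  have hPapp : ∀ i j, P i j = ∑ k, B k i * B k j := by
    intro i j
    rw [hPdef]
    simp [Matrix.mul_apply, Matrix.conjTranspose_apply]
  have hsqrt : Real.sqrt (t - t^2) * Real.sqrt (t - t^2) = t - t^2 :=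
    Real.mul_self_sqrt htt
  have hP00 : P 0 0 = 1 := by
    rw [hPapp, Fin.sum_univ_succ]
    simp [hBdef, Fin.succ_ne_zero]
  have hP0s : ∀ j : Fin n, P 0 j.succ = t := by
    intro j
    rw [hPapp, Fin.sum_univ_succ]
    simp [hBdef, Fin.succ_ne_zero]
  have hPs0 : ∀ j : Fin n, P j.succ 0 = t := by
    intro j
    rw [hPapp, Fin.sum_univ_succ]
    simp [hBdef, Fin.succ_ne_zero]
  have hPss : ∀ j : Fin n, P j.succ j.succ = t := by
    intro j
    rw [hPapp, Fin.sum_univ_succ]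
    have : ∀ k : Fin n, B k.succ j.succ * B k.succ j.succ
        = if k = j then t - t^2 else 0 := by
      intro k
      by_cases h : k = j
      · subst h; simp [hBdef, Fin.succ_ne_zero, hsqrt]
      · have : k.succ ≠ j.succ := fun hc => h (Fin.succ_injective _ hc)
        simp [hBdef, Fin.succ_ne_zero, this, h]
    rw [Finset.sum_congr rfl fun k _ => this k, Finset.sum_ite_eq' Finset.univ j
      (fun _ => t - t^2)]
    simp [hBdef, Fin.succ_ne_zero]
    ring
  have hPoff : ∀ i j : Fin n, i ≠ j → P i.succ j.succ = t^2 := by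
    intro i j hij
    rw [hPapp, Fin.sum_univ_succ]
    have : ∀ k : Fin n, B k.succ i.succ * B k.succ j.succ = 0 := by
      intro k
      by_cases h : k = i
      · subst h
        have : k.succ ≠ j.succ := fun hc => hij (Fin.succ_injective _ hc)
        simp [hBdef, Fin.succ_ne_zero, this]
      · have hki : k.succ ≠ i.succ := fun hc => h (Fin.succ_injective _ hc)
        simp [hBdef, Fin.succ_ne_zero, hki]
    rw [Finset.sum_congr rfl fun k _ => this k]
    simp [hBdef, Fin.succ_ne_zero]
    ring
  refine ⟨((edgeFinset' G).card : ℝ) * t^2, ?_, ?_, P, hPsd, hP00,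
    fun j => ⟨hP0s j, hPs0 j, hPss j⟩, ?_, ?_⟩
  · apply max_le
    · positivity
    · exact mul_le_mul_of_nonneg_left h2t (le_of_lt hcard)
  · have : t^2 ≤ t := by nlinarith
    exact mul_le_mul_of_nonneg_left this (le_of_lt hcard)
  · intro i j hij
    rw [hPoff i j hij]
    constructor
    · exact max_le (by positivity) h2t
    · nlinarith
  · intro i j hadj
    rw [hPoff i j (G.ne_of_adj hadj)]
    field_simp

open Matrix in
lemma isClosed_posSemidef {m : Type*} [Fintype m] :
    IsClosed {M : Matrix m m ℝ | M.PosSemidef} := by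
  have : {M : Matrix m m ℝ | M.PosSemidef} =
      (⋂ (i : m) (j : m), {M : Matrix m m ℝ | M j i = M i j}) ∩
      ⋂ (x : m → ℝ), {M : Matrix m m ℝ | 0 ≤ dotProduct (star x) (M *ᵥ x)} := by
    ext M
    simp only [Set.mem_setOf_eq, Set.mem_inter_iff, Set.mem_iInter]
    constructor
    · intro hM
      refine ⟨fun i j => ?_, fun x => hM.dotProduct_mulVec_nonneg x⟩
      have := hM.1
      rw [Matrix.IsHermitian] at this
      conv_rhs => rw [← this]
      simp [Matrix.conjTranspose_apply]
    · intro ⟨h1, h2⟩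
      refine Matrix.PosSemidef.of_dotProduct_mulVec_nonneg ?_ h2
      rw [Matrix.IsHermitian]
      ext i j
      simp [Matrix.conjTranspose_apply, h1 j i]
  rw [this]
  apply IsClosed.inter
  · exact isClosed_iInter fun i => isClosed_iInter fun j =>
      isClosed_eq (continuous_id.matrix_elem j i) (continuous_id.matrix_elem i j)
  · exact isClosed_iInter fun x => isClosed_le continuous_const
      (continuous_const.dotProduct (continuous_id.matrix_mulVec continuous_const))

lemma isCompact_SMatSet {n : ℕ} (G : SimpleGraph (Fin n)) [DecidableRel G.Adj]
    {t : ℝ} (ht : t ∈ Set.Icc (0:ℝ) 1) : IsCompact (SMatSet G t) := by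
  obtain ⟨ht0, ht1⟩ := ht
  set E : ℝ := ((edgeFinset' G).card : ℝ) with hEdef
  have hE0 : (0:ℝ) ≤ E := by positivity
  set K : Set (ℝ × Matrix (Fin (n+1)) (Fin (n+1)) ℝ) :=
    {sp | max 0 (E * (2*t-1)) ≤ sp.1} ∩ {sp | sp.1 ≤ E * t} ∩
    {sp | sp.2.PosSemidef} ∩ {sp | sp.2 0 0 = 1} ∩
    (⋂ (j : Fin n), ({sp | sp.2 0 j.succ = t} ∩ {sp | sp.2 j.succ 0 = t} ∩
      {sp | sp.2 j.succ j.succ = t})) ∩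
    (⋂ (i : Fin n) (j : Fin n),
      {sp : ℝ × Matrix (Fin (n+1)) (Fin (n+1)) ℝ | i ≠ j →
        max 0 (2*t-1) ≤ sp.2 i.succ j.succ ∧ sp.2 i.succ j.succ ≤ t}) ∩
    (⋂ (i : Fin n) (j : Fin n),
      {sp : ℝ × Matrix (Fin (n+1)) (Fin (n+1)) ℝ | G.Adj i j →
        sp.2 i.succ j.succ = sp.1 / E}) with hK
  have hKclosed : IsClosed K := by
    refine (((((((isClosed_le continuous_const continuous_fst).inter
      (isClosed_le continuous_fst continuous_const)).inter
      (isClosed_posSemidef.preimage continuous_snd)).inter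
      (isClosed_eq (continuous_snd.matrix_elem _ _) continuous_const)).inter
      (isClosed_iInter fun j => ((isClosed_eq (continuous_snd.matrix_elem _ _)
        continuous_const).inter (isClosed_eq (continuous_snd.matrix_elem _ _)
        continuous_const)).inter (isClosed_eq (continuous_snd.matrix_elem _ _)
        continuous_const))).inter
      (isClosed_iInter fun i => isClosed_iInter fun j => ?_)).inter
      (isClosed_iInter fun i => isClosed_iInter fun j => ?_))
    · by_cases h : i = j
      · simp only [h]
        convert isClosed_univ using 1
        ext sp; simp
      · have : {sp : ℝ × Matrix (Fin (n+1)) (Fin (n+1)) ℝ | i ≠ j →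
            max 0 (2*t-1) ≤ sp.2 i.succ j.succ ∧ sp.2 i.succ j.succ ≤ t} =
            {sp | max 0 (2*t-1) ≤ sp.2 i.succ j.succ} ∩
            {sp | sp.2 i.succ j.succ ≤ t} := by
          ext sp; simp [h]
        rw [this]
        exact (isClosed_le continuous_const (continuous_snd.matrix_elem _ _)).inter
          (isClosed_le (continuous_snd.matrix_elem _ _) continuous_const)
    · by_cases h : G.Adj i j
      · have : {sp : ℝ × Matrix (Fin (n+1)) (Fin (n+1)) ℝ | G.Adj i j →
            sp.2 i.succ j.succ = sp.1 / E} =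
            {sp | sp.2 i.succ j.succ = sp.1 / E} := by
          ext sp; simp [h]
        rw [this]
        exact isClosed_eq (continuous_snd.matrix_elem _ _) (continuous_fst.div_const E)
      · have : {sp : ℝ × Matrix (Fin (n+1)) (Fin (n+1)) ℝ | G.Adj i j →
            sp.2 i.succ j.succ = sp.1 / E} = Set.univ := by
          ext sp; simp [h]
        rw [this]; exact isClosed_univ
  -- K is contained in a compact box
  have hKsub : K ⊆ (Set.Icc (0:ℝ) E) ×ˢ
      (Set.pi Set.univ fun _ : Fin (n+1) => Set.pi Set.univ
        fun _ : Fin (n+1) => Set.Icc (-1:ℝ) 1) := by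
    rintro ⟨s, P⟩ hsp
    obtain ⟨⟨⟨⟨⟨⟨h1, h2⟩, _hpsd⟩, h4⟩, h5⟩, h6⟩, _h7⟩ := hsp
    have h4' : P 0 0 = 1 := h4
    have h5'' : ∀ j : Fin n, P 0 j.succ = t ∧ P j.succ 0 = t ∧ P j.succ j.succ = t := by
      intro j
      have := Set.mem_iInter.mp h5 j
      exact ⟨this.1.1, this.1.2, this.2⟩
    have h6'' : ∀ i j : Fin n, i ≠ j →
        max 0 (2*t-1) ≤ P i.succ j.succ ∧ P i.succ j.succ ≤ t := by
      intro i j hij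
      exact Set.mem_iInter.mp (Set.mem_iInter.mp h6 i) j hij
    have h1' : max 0 (E * (2*t-1)) ≤ s := h1
    have h2' : s ≤ E * t := h2
    constructor
    · constructor
      · exact le_trans (le_max_left _ _) h1'
      · exact le_trans h2' (by nlinarith)
    · intro i _
      intro j _
      -- show P i j ∈ Icc (-1) 1
      simp only [Set.mem_Icc]
      induction i using Fin.cases with
      | zero =>
        induction j using Fin.cases with
        | zero => rw [h4']; norm_num
        | succ j => rw [(h5'' j).1]; constructor <;> linarith
      | succ i =>
        induction j using Fin.cases with
        | zero => rw [(h5'' i).2.1]; constructor <;> linarith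
        | succ j =>
          by_cases hij : i = j
          · subst hij; rw [(h5'' i).2.2]; constructor <;> linarith
          · obtain ⟨hlo, hhi⟩ := h6'' i j hij
            have : (0:ℝ) ≤ P i.succ j.succ := le_trans (le_max_left _ _) hlo
            constructor <;> linarith
  have hbox : IsCompact ((Set.Icc (0:ℝ) E) ×ˢ
      (Set.pi Set.univ fun _ : Fin (n+1) => Set.pi Set.univ
        fun _ : Fin (n+1) => Set.Icc (-1:ℝ) 1)) :=
    isCompact_Icc.prod (isCompact_univ_pi fun _ => isCompact_univ_pi fun _ => isCompact_Icc)
  have hKcompact : IsCompact K := hbox.of_isClosed_subset hKclosed hKsub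
  have himage : SMatSet G t = Prod.fst '' K := by
    ext s
    constructor
    · rintro ⟨h1, h2, P, hpsd, h4, h5, h6, h7⟩
      refine ⟨(s, P), ?_, rfl⟩
      refine ⟨⟨⟨⟨⟨⟨h1, h2⟩, hpsd⟩, h4⟩, ?_⟩, ?_⟩, ?_⟩
      · exact Set.mem_iInter.mpr fun j => ⟨⟨(h5 j).1, (h5 j).2.1⟩, (h5 j).2.2⟩
      · exact Set.mem_iInter.mpr fun i => Set.mem_iInter.mpr fun j => fun hij => h6 i j hij
      · exact Set.mem_iInter.mpr fun i => Set.mem_iInter.mpr fun j => fun hadj => h7 i j hadj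
    · rintro ⟨⟨s', P⟩, hsp, rfl⟩
      obtain ⟨⟨⟨⟨⟨⟨h1, h2⟩, hpsd⟩, h4⟩, h5⟩, h6⟩, h7⟩ := hsp
      have h5' := fun j => Set.mem_iInter.mp h5 j
      have h6' := fun i j => Set.mem_iInter.mp (Set.mem_iInter.mp h6 i) j
      have h7' := fun i j => Set.mem_iInter.mp (Set.mem_iInter.mp h7 i) j
      exact ⟨h1, h2, P, hpsd, h4, fun j => ⟨(h5' j).1.1, (h5' j).1.2, (h5' j).2⟩,
        fun i j hij => h6' i j hij, fun i j hadj => h7' i j hadj⟩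
  rw [himage]
  exact hKcompact.image continuous_fst

theorem stmt7 {n : ℕ} (hn : 1 ≤ n) (G : SimpleGraph (Fin n)) [DecidableRel G.Adj]
    (hE : 0 < (edgeFinset' G).card)
    (hvt : VertexTransitive G) (het : EdgeTransitive G)
    (t : ℝ) (ht : t ∈ Set.Icc (0 : ℝ) 1) :
    IsLeast
      {s : ℝ |
        max 0 (((edgeFinset' G).card : ℝ) * (2 * t - 1)) ≤ s ∧
        s ≤ ((edgeFinset' G).card : ℝ) * t ∧
        ∃ P : Matrix (Fin (n + 1)) (Fin (n + 1)) ℝ,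
          P.PosSemidef ∧
          P 0 0 = 1 ∧
          (∀ j : Fin n, P 0 j.succ = t ∧ P j.succ 0 = t ∧ P j.succ j.succ = t) ∧
          (∀ i j : Fin n, i ≠ j →
            max 0 (2 * t - 1) ≤ P i.succ j.succ ∧ P i.succ j.succ ≤ t) ∧
          (∀ i j : Fin n, G.Adj i j →
            P i.succ j.succ = s / ((edgeFinset' G).card : ℝ))}
      (fvect G t) := by
  classical
  have hset : {s : ℝ | ∃ p : Corr n, IsVect p ∧ IsSync p ∧ HasMarginals p t ∧ s = Fval G p}
      = SMatSet G t := by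
    ext s
    constructor
    · rintro ⟨p, ⟨R⟩, hsync, hmarg, rfl⟩
      exact feasible_mem_S hn G hE het ht R hsync hmarg
    · intro hs
      obtain ⟨p, hvp, hsync, hmarg, hval⟩ := S_subset_feasible G hE ht hs
      exact ⟨p, hvp, hsync, hmarg, hval⟩
  have hfv : fvect G t = sInf (SMatSet G t) := by
    unfold fvect
    rw [hset]
  have hcpt := isCompact_SMatSet G ht
  have hne := SMatSet_nonempty G hE ht
  have hmem : sInf (SMatSet G t) ∈ SMatSet G t := hcpt.sInf_mem hne
  constructor
  · rw [hfv]
    exact hmem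
  · intro s hs
    rw [hfv]
    exact csInf_le hcpt.bddBelow hs
end
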